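/- arXiv:1209.4879 — 3 statements merged into one kernel-verified Lean document; each statement's English description precedes it below -/
import Mathlib

section
/- For all natural numbers d ≥ 3 and n ≥ d + 1 there exists a (d+1)-uniform hypergraph H on n vertices that admits a linear embedding into ℝ^d and whose strong chromatic number satisfies χˢ(H) ≥ ⌊√(n − d + 3)⌋ + d − 3. (In the paper's notation: χˢ_{d,d+1}(n) ≥ ⌊√(n−d+3)⌋ + d − 3.) -/
/-- A hypergraph on a vertex type `V`: a finite set of edges, each a finite set of vertices. -/
structure FinsetHypergraph (V : Type) where
  edges : Finset (Finset V)

namespace FinsetHypergraph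

variable {V : Type}

/-- `H` is `k`-uniform if every edge has exactly `k` vertices. -/
def IsUniform (H : FinsetHypergraph V) (k : ℕ) : Prop :=
  ∀ e ∈ H.edges, e.card = k

/-- A (linear) embedding of the `k`-uniform hypergraph `H` into `ℝ^d`:
a map `φ : V → ℝ^d` such that the affine span of every embedded edge has
dimension `k - 1`, and for any two edges the convex hulls intersect exactly in
the convex hull of the image of their common vertices. -/
def HasLinearEmbedding [DecidableEq V] (H : FinsetHypergraph V) (k d : ℕ) : Prop :=
  ∃ φ : V → EuclideanSpace ℝ (Fin d),
    (∀ e ∈ H.edges,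
      Module.finrank ℝ (affineSpan ℝ (φ '' (e : Set V))).direction = k - 1) ∧
    (∀ e₁ ∈ H.edges, ∀ e₂ ∈ H.edges,
      convexHull ℝ (φ '' ((e₁ ∩ e₂ : Finset V) : Set V)) =
        convexHull ℝ (φ '' (e₁ : Set V)) ∩ convexHull ℝ (φ '' (e₂ : Set V)))

/-- A strong `c`-coloring: a coloring of the vertices injective on every edge. -/
def StrongColorable (H : FinsetHypergraph V) (c : ℕ) : Prop :=
  ∃ κ : V → Fin c, ∀ e ∈ H.edges, Set.InjOn κ (e : Set V)

/-- The strong chromatic number: least `c` admitting a strong `c`-coloring. -/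
noncomputable def strongChromaticNumber (H : FinsetHypergraph V) : ℕ :=
  sInf {c | H.StrongColorable c}

/-- A weak `c`-coloring: a coloring of the vertices such that no edge is monochromatic. -/
def WeakColorable (H : FinsetHypergraph V) (c : ℕ) : Prop :=
  ∃ κ : V → Fin c, ∀ e ∈ H.edges, ∃ u ∈ e, ∃ v ∈ e, κ u ≠ κ v

/-- The weak chromatic number: least `c` admitting a weak `c`-coloring. -/
noncomputable def weakChromaticNumber (H : FinsetHypergraph V) : ℕ :=
  sInf {c | H.WeakColorable c}

end FinsetHypergraph


namespace SLB


/-- triangular numbers -/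
def tri : ℕ → ℕ
  | 0 => 0
  | n+1 => tri n + n

lemma tri_mono : Monotone tri := by
  apply monotone_nat_of_le_succ
  intro n; simp [tri]

lemma code_lt {s t : ℕ} (h : s < t) : tri t + s < tri (t+1) := by
  simp [tri]; omega

lemma code_inj {s t s' t' : ℕ} (h : s < t) (h' : s' < t')
    (he : tri t + s = tri t' + s') : s = s' ∧ t = t' := by
  rcases lt_trichotomy t t' with ht | ht | ht
  · have := code_lt h
    have h2 : tri (t+1) ≤ tri t' := tri_mono ht
    omega
  · subst ht; omega
  · have := code_lt h'
    have h2 : tri (t'+1) ≤ tri t := tri_mono ht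
    omega

lemma two_tri (k : ℕ) : 2 * tri k + k = k * k := by
  induction k with
  | zero => simp [tri]
  | succ n ih => simp [tri]; ring_nf; ring_nf at ih; omega

/-- index of the `r`-th apex vertex is `r` (for `r < d - 3`);
index of curve vertex `s` : -/
def vIdx (d s : ℕ) : ℕ := d - 3 + s

def aIdx (d m s t : ℕ) : ℕ := d - 3 + m + 2 * (tri t + s)

def bIdx (d m s t : ℕ) : ℕ := aIdx d m s t + 1

/-- the underlying (ℕ-indexed) edge for the pair `s < t < m` -/
def uedge (d m s t : ℕ) : Finset ℕ :=
  Finset.range (d - 3) ∪ {vIdx d s, vIdx d t, aIdx d m s t, bIdx d m s t}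

lemma vIdx_lt_aIdx (d m s t x : ℕ) (hx : x < m) : vIdx d x < aIdx d m s t := by
  simp [vIdx, aIdx]; omega

lemma bIdx_lt (d m s t : ℕ) (hst : s < t) (ht : t < m) :
    bIdx d m s t < d - 3 + m * m := by
  have h1 : tri (t+1) ≤ tri m := tri_mono ht
  have h2 := code_lt hst
  have h3 := two_tri m
  simp [bIdx, aIdx]
  omega

lemma mem_uedge {d m s t x : ℕ} :
    x ∈ uedge d m s t ↔ x < d - 3 ∨ x = vIdx d s ∨ x = vIdx d t ∨
      x = aIdx d m s t ∨ x = bIdx d m s t := by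
  simp [uedge, Finset.mem_range]; tauto

lemma uedge_lt {d m s t : ℕ} (hst : s < t) (ht : t < m) {n : ℕ}
    (hn : d - 3 + m * m ≤ n) : ∀ x ∈ uedge d m s t, x < n := by
  intro x hx
  have hb := bIdx_lt d m s t hst ht
  have h1 : vIdx d s < bIdx d m s t := (vIdx_lt_aIdx d m s t s (hst.trans ht)).trans (by simp [bIdx])
  have h2 : vIdx d t < bIdx d m s t := (vIdx_lt_aIdx d m s t t ht).trans (by simp [bIdx])
  have h3 : aIdx d m s t < bIdx d m s t := by simp [bIdx]
  rcases mem_uedge.1 hx with h | h | h | h | h <;> omega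

lemma card_uedge {d m s t : ℕ} (hd : 3 ≤ d) (hst : s < t) (ht : t < m) :
    (uedge d m s t).card = d + 1 := by
  have hv : vIdx d s ≠ vIdx d t := by simp [vIdx]; omega
  have h1 : vIdx d s < aIdx d m s t := vIdx_lt_aIdx d m s t s (hst.trans ht)
  have h2 : vIdx d t < aIdx d m s t := vIdx_lt_aIdx d m s t t ht
  have h3 : aIdx d m s t ≠ bIdx d m s t := by simp [bIdx]
  rw [uedge, Finset.card_union_of_disjoint]
  · have : ({vIdx d s, vIdx d t, aIdx d m s t, bIdx d m s t} : Finset ℕ).card = 4 := by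
      rw [Finset.card_insert_of_notMem, Finset.card_insert_of_notMem,
        Finset.card_insert_of_notMem, Finset.card_singleton]
      · simp [bIdx]
      · simp [bIdx]; omega
      · simp [bIdx]; omega
    rw [Finset.card_range, this]; omega
  · rw [Finset.disjoint_left]
    intro x hx hx'
    have : d - 3 ≤ x := by
      simp [Finset.mem_insert, vIdx, aIdx, bIdx] at hx'
      rcases hx' with h|h|h|h <;> omega
    simp at hx; omega




variable {E : Type*} [AddCommGroup E] [Module ℝ E]

lemma affval_comb (L : E →ₗ[ℝ] ℝ) (c : ℝ) {ι : Type*} (t : Finset ι) (w : ι → ℝ) (z : ι → E)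
    (hw : ∑ i ∈ t, w i = 1) :
    L (t.centerMass w z) + c = ∑ i ∈ t, w i * (L (z i) + c) := by
  rw [Finset.centerMass_eq_of_sum_1 _ _ hw, map_sum]
  simp only [map_smul, smul_eq_mul, mul_add, Finset.sum_add_distrib, ← Finset.sum_mul, hw]
  ring

lemma face_lemma (L : E →ₗ[ℝ] ℝ) (c : ℝ) (s : Set E)
    (hs : ∀ y ∈ s, L y + c ≤ 0) {x : E} (hx : x ∈ convexHull ℝ s)
    (hx0 : L x + c = 0) : x ∈ convexHull ℝ {y | y ∈ s ∧ L y + c = 0} := by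
  rw [convexHull_eq] at hx
  obtain ⟨ι, t, w, z, hw0, hw1, hz, hcm⟩ := hx
  have hcomb := affval_comb L c t w z hw1
  rw [hcm, hx0] at hcomb
  have hzero : ∀ i ∈ t, w i * (L (z i) + c) = 0 := by
    rw [← Finset.sum_eq_zero_iff_of_nonpos]
    · exact hcomb.symm
    · intro i hi
      have := hs (z i) (hz i hi)
      have := hw0 i hi
      nlinarith
  rw [← hcm, ← Finset.centerMass_filter_ne_zero (w := w) z]
  refine Finset.centerMass_mem_convexHull _ (fun i hi => hw0 i (Finset.mem_filter.1 hi).1) ?_ ?_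
  · rw [Finset.sum_filter_ne_zero, hw1]; norm_num
  · intro i hi
    rw [Finset.mem_filter] at hi
    refine ⟨hz i hi.1, ?_⟩
    have := hzero i hi.1
    rcases mul_eq_zero.1 this with h | h
    · exact absurd h hi.2
    · exact h

lemma convex_half (L : E →ₗ[ℝ] ℝ) (c : ℝ) : Convex ℝ {y : E | L y + c ≤ 0} := by
  intro x hx y hy a b ha hb hab
  simp only [Set.mem_setOf_eq, map_add, map_smul, smul_eq_mul] at *
  have h1 : a * (L x + c) ≤ 0 := mul_nonpos_of_nonneg_of_nonpos ha hx
  have h2 : b * (L y + c) ≤ 0 := mul_nonpos_of_nonneg_of_nonpos hb hy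
  have h3 : a * c + b * c = c := by linear_combination c * hab
  nlinarith

lemma convex_half' (L : E →ₗ[ℝ] ℝ) (c : ℝ) : Convex ℝ {y : E | 0 ≤ L y + c} := by
  intro x hx y hy a b ha hb hab
  simp only [Set.mem_setOf_eq, map_add, map_smul, smul_eq_mul] at *
  have h1 : 0 ≤ a * (L x + c) := mul_nonneg ha hx
  have h2 : 0 ≤ b * (L y + c) := mul_nonneg hb hy
  have h3 : a * c + b * c = c := by linear_combination c * hab
  nlinarith

/-- The key separation lemma. -/
lemma sep_hull (L : E →ₗ[ℝ] ℝ) (c : ℝ) (A B C : Set E)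
    (hCA : C ⊆ A) (hCB : C ⊆ B)
    (hA : ∀ y ∈ A, L y + c ≤ 0) (hB : ∀ y ∈ B, 0 ≤ L y + c)
    (hfA : ∀ y ∈ A, L y + c = 0 → y ∈ C) (hfB : ∀ y ∈ B, L y + c = 0 → y ∈ C) :
    convexHull ℝ C = convexHull ℝ A ∩ convexHull ℝ B := by
  apply Set.Subset.antisymm
  · exact Set.subset_inter (convexHull_mono hCA) (convexHull_mono hCB)
  · rintro x ⟨hxA, hxB⟩
    have h1 : L x + c ≤ 0 :=
      convexHull_min (fun y hy => hA y hy) (convex_half L c) hxA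
    have h2 : 0 ≤ L x + c :=
      convexHull_min (fun y hy => hB y hy) (convex_half' L c) hxB
    have h0 : L x + c = 0 := le_antisymm h1 h2
    have := face_lemma L c A hA hxA h0
    refine convexHull_mono ?_ this
    intro y hy
    exact hfA y hy.1 hy.2


noncomputable section

/-- parameter of the auxiliary point near `s` for the pair `(s,t)` -/
def aPar (s t : ℕ) : ℝ := s + 1 / (4 * ((t:ℝ) - s))
def bPar (s t : ℕ) : ℝ := t - 1 / (4 * ((t:ℝ) - s))

open Classical in
def auxpar (m w : ℕ) : ℝ :=
  if h : ∃ p : ℕ × ℕ, p.1 < p.2 ∧ p.2 < m ∧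
      (w = 2 * (tri p.2 + p.1) ∨ w = 2 * (tri p.2 + p.1) + 1) then
    (if Even w then aPar h.choose.1 h.choose.2 else bPar h.choose.1 h.choose.2)
  else 0

lemma auxpar_a {m s t : ℕ} (hst : s < t) (ht : t < m) :
    auxpar m (2 * (tri t + s)) = aPar s t := by
  have h : ∃ p : ℕ × ℕ, p.1 < p.2 ∧ p.2 < m ∧
      (2 * (tri t + s) = 2 * (tri p.2 + p.1) ∨ 2 * (tri t + s) = 2 * (tri p.2 + p.1) + 1) :=
    ⟨(s, t), hst, ht, Or.inl rfl⟩
  rw [auxpar]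
  rw [dif_pos h, if_pos ⟨tri t + s, by ring⟩]
  obtain ⟨h1, h2, h3⟩ := h.choose_spec
  rcases h3 with h3 | h3
  · have := code_inj hst h1 (by omega)
    rw [← this.1, ← this.2]
  · omega

lemma auxpar_b {m s t : ℕ} (hst : s < t) (ht : t < m) :
    auxpar m (2 * (tri t + s) + 1) = bPar s t := by
  have h : ∃ p : ℕ × ℕ, p.1 < p.2 ∧ p.2 < m ∧
      (2 * (tri t + s) + 1 = 2 * (tri p.2 + p.1) ∨ 2 * (tri t + s) + 1 = 2 * (tri p.2 + p.1) + 1) :=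
    ⟨(s, t), hst, ht, Or.inr rfl⟩
  rw [auxpar]
  rw [dif_pos h, if_neg (by simp [Nat.even_add_one, Nat.even_mul])]
  obtain ⟨h1, h2, h3⟩ := h.choose_spec
  rcases h3 with h3 | h3
  · omega
  · have := code_inj hst h1 (by omega)
    rw [← this.1, ← this.2]

def par (d m u : ℕ) : ℝ :=
  if u < d - 3 + m then ((u - (d-3) : ℕ) : ℝ) else auxpar m (u - (d - 3 + m))

variable {d : ℕ}

/-- the moment-curve point with parameter `t`, in the slice spanned by the
first three coordinates. -/
def momentE (d : ℕ) (t : ℝ) : EuclideanSpace ℝ (Fin d) := WithLp.toLp 2 (fun i : Fin d =>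
  if (i:ℕ) = 0 then t else if (i:ℕ) = 1 then t^2 else if (i:ℕ) = 2 then t^3 else 0)

/-- the `r`-th apex: the unit vector in coordinate `3 + r`. -/
def wVec (d r : ℕ) : EuclideanSpace ℝ (Fin d) := WithLp.toLp 2 (fun i : Fin d =>
  if (i:ℕ) = 3 + r then 1 else 0)

def pos (d m u : ℕ) : EuclideanSpace ℝ (Fin d) :=
  if u < d - 3 then wVec d u else momentE d (par d m u)

lemma pos_w {u : ℕ} (h : u < d - 3) (m : ℕ) : pos d m u = wVec d u := if_pos h

lemma pos_v {m s : ℕ} (hs : s < m) : pos d m (vIdx d s) = momentE d s := by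
  rw [pos, if_neg (by simp [vIdx]), par, if_pos (by simp [vIdx]; omega)]
  simp [vIdx]

lemma pos_a {m s t : ℕ} (hst : s < t) (ht : t < m) :
    pos d m (aIdx d m s t) = momentE d (aPar s t) := by
  rw [pos, if_neg (by simp [aIdx]; omega), par, if_neg (by simp [aIdx])]
  have : aIdx d m s t - (d - 3 + m) = 2 * (tri t + s) := by simp [aIdx]
  rw [this, auxpar_a hst ht]

lemma pos_b {m s t : ℕ} (hst : s < t) (ht : t < m) :
    pos d m (bIdx d m s t) = momentE d (bPar s t) := by
  rw [pos, if_neg (by simp [bIdx, aIdx]; omega), par, if_neg (by simp [bIdx, aIdx]; omega)]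
  have : bIdx d m s t - (d - 3 + m) = 2 * (tri t + s) + 1 := by simp [bIdx, aIdx]; omega
  rw [this, auxpar_b hst ht]

end



noncomputable section
open Finset
variable {d : ℕ}

/-- the linear part of the affine functional whose restriction to the moment
curve is the cubic with coefficients `c₀ + c₁ x + c₂ x² + c₃ x³` and which
vanishes on all `wVec`s. -/
def cubeL (d : ℕ) (hd : 3 ≤ d) (c₀ c₁ c₂ c₃ : ℝ) : EuclideanSpace ℝ (Fin d) →ₗ[ℝ] ℝ where
  toFun x := c₁ * x ⟨0, by omega⟩ + c₂ * x ⟨1, by omega⟩ + c₃ * x ⟨2, by omega⟩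
    - c₀ * ∑ i ∈ univ.filter (fun i : Fin d => 3 ≤ (i:ℕ)), x i
  map_add' x y := by
    simp only [PiLp.add_apply, Finset.sum_add_distrib]
    ring
  map_smul' r x := by
    simp only [PiLp.smul_apply, smul_eq_mul, ← Finset.mul_sum, RingHom.id_apply]
    ring

lemma cubeL_moment (hd : 3 ≤ d) (c₀ c₁ c₂ c₃ t : ℝ) :
    cubeL d hd c₀ c₁ c₂ c₃ (momentE d t) + c₀ = c₀ + c₁ * t + c₂ * t^2 + c₃ * t^3 := by
  have hz : ∑ i ∈ univ.filter (fun i : Fin d => 3 ≤ (i:ℕ)), momentE d t i = 0 := by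
    apply Finset.sum_eq_zero
    intro i hi
    simp only [mem_filter] at hi
    simp only [momentE, PiLp.toLp_apply]
    rw [if_neg (by omega), if_neg (by omega), if_neg (by omega)]
  simp only [cubeL, LinearMap.coe_mk, AddHom.coe_mk]
  rw [hz]
  have h0 : momentE d t ⟨0, by omega⟩ = t := by simp [momentE]
  have h1 : momentE d t ⟨1, by omega⟩ = t^2 := by simp [momentE]
  have h2 : momentE d t ⟨2, by omega⟩ = t^3 := by simp [momentE]
  rw [h0, h1, h2]
  ring

lemma cubeL_w (hd : 3 ≤ d) (c₀ c₁ c₂ c₃ : ℝ) {r : ℕ} (hr : r < d - 3) :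
    cubeL d hd c₀ c₁ c₂ c₃ (wVec d r) + c₀ = 0 := by
  have hz : ∑ i ∈ univ.filter (fun i : Fin d => 3 ≤ (i:ℕ)), wVec d r i = 1 := by
    rw [Finset.sum_eq_single (⟨3 + r, by omega⟩ : Fin d)]
    · simp [wVec]
    · intro b hb hne
      simp only [wVec, PiLp.toLp_apply]
      rw [if_neg]
      intro hc
      exact hne (Fin.ext hc)
    · intro h
      exact absurd (Finset.mem_filter.2 ⟨Finset.mem_univ _, by simp⟩) h
  simp only [cubeL, LinearMap.coe_mk, AddHom.coe_mk]
  rw [hz]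
  have h0 : wVec d r ⟨0, by omega⟩ = 0 := by simp only [wVec, PiLp.toLp_apply]; rw [if_neg (by omega)]
  have h1 : wVec d r ⟨1, by omega⟩ = 0 := by simp only [wVec, PiLp.toLp_apply]; rw [if_neg (by omega)]
  have h2 : wVec d r ⟨2, by omega⟩ = 0 := by simp only [wVec, PiLp.toLp_apply]; rw [if_neg (by omega)]
  rw [h0, h1, h2]
  ring

end

noncomputable section
open Finset

def SepPred (d m : ℕ) (e₁ e₂ : Finset ℕ) : Prop :=
  ∃ (L : EuclideanSpace ℝ (Fin d) →ₗ[ℝ] ℝ) (c : ℝ),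
    (∀ u ∈ e₁, L (pos d m u) + c ≤ 0 ∧ (L (pos d m u) + c = 0 → u ∈ e₂)) ∧
    (∀ u ∈ e₂, 0 ≤ L (pos d m u) + c ∧ (L (pos d m u) + c = 0 → u ∈ e₁))

lemma SepPred.symm {d m : ℕ} {e₁ e₂ : Finset ℕ} (h : SepPred d m e₁ e₂) :
    SepPred d m e₂ e₁ := by
  obtain ⟨L, c, h1, h2⟩ := h
  refine ⟨-L, -c, fun u hu => ?_, fun u hu => ?_⟩
  · obtain ⟨ha, hb⟩ := h2 u hu
    constructor
    · simp only [LinearMap.neg_apply]; linarith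
    · intro he; apply hb; simp only [LinearMap.neg_apply] at he; linarith
  · obtain ⟨ha, hb⟩ := h1 u hu
    constructor
    · simp only [LinearMap.neg_apply]; linarith
    · intro he; apply hb; simp only [LinearMap.neg_apply] at he; linarith

lemma sep_to_hull {d m : ℕ} {e₁ e₂ : Finset ℕ} (h : SepPred d m e₁ e₂) :
    convexHull ℝ (pos d m '' ↑(e₁ ∩ e₂)) =
      convexHull ℝ (pos d m '' ↑e₁) ∩ convexHull ℝ (pos d m '' ↑e₂) := by
  obtain ⟨L, c, h1, h2⟩ := h
  apply sep_hull L c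
  · exact Set.image_mono (by simp [Finset.coe_inter])
  · exact Set.image_mono (by simp [Finset.coe_inter])
  · rintro y ⟨u, hu, rfl⟩; exact (h1 u hu).1
  · rintro y ⟨u, hu, rfl⟩; exact (h2 u hu).1
  · rintro y ⟨u, hu, rfl⟩ hy
    exact ⟨u, by simp only [Finset.coe_inter, Set.mem_inter_iff]; exact ⟨hu, (h1 u hu).2 hy⟩, rfl⟩
  · rintro y ⟨u, hu, rfl⟩ hy
    exact ⟨u, by simp only [Finset.coe_inter, Set.mem_inter_iff]; exact ⟨(h2 u hu).2 hy, hu⟩, rfl⟩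

set_option maxHeartbeats 1000000 in
lemma sep_of_roots {d m : ℕ} (hd : 3 ≤ d) {s t s' t' : ℕ}
    (hst : s < t) (ht : t < m) (hst' : s' < t') (ht' : t' < m)
    (r₁ r₂ r₃ : ℝ)
    (hqs : ((s:ℝ) - r₁) * ((s:ℝ) - r₂) * ((s:ℝ) - r₃) ≤ 0)
    (hqt : ((t:ℝ) - r₁) * ((t:ℝ) - r₂) * ((t:ℝ) - r₃) ≤ 0)
    (hqs' : 0 ≤ ((s':ℝ) - r₁) * ((s':ℝ) - r₂) * ((s':ℝ) - r₃))
    (hqt' : 0 ≤ ((t':ℝ) - r₁) * ((t':ℝ) - r₂) * ((t':ℝ) - r₃))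
    (hqa : (aPar s t - r₁) * (aPar s t - r₂) * (aPar s t - r₃) < 0)
    (hqb : (bPar s t - r₁) * (bPar s t - r₂) * (bPar s t - r₃) < 0)
    (hqa' : 0 < (aPar s' t' - r₁) * (aPar s' t' - r₂) * (aPar s' t' - r₃))
    (hqb' : 0 < (bPar s' t' - r₁) * (bPar s' t' - r₂) * (bPar s' t' - r₃))
    (hzs : ((s:ℝ) - r₁) * ((s:ℝ) - r₂) * ((s:ℝ) - r₃) = 0 → s = s' ∨ s = t')
    (hzt : ((t:ℝ) - r₁) * ((t:ℝ) - r₂) * ((t:ℝ) - r₃) = 0 → t = s' ∨ t = t')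
    (hzs' : ((s':ℝ) - r₁) * ((s':ℝ) - r₂) * ((s':ℝ) - r₃) = 0 → s' = s ∨ s' = t)
    (hzt' : ((t':ℝ) - r₁) * ((t':ℝ) - r₂) * ((t':ℝ) - r₃) = 0 → t' = s ∨ t' = t) :
    SepPred d m (uedge d m s t) (uedge d m s' t') := by
  set c₀ : ℝ := -(r₁*r₂*r₃) with hc₀
  refine ⟨cubeL d hd c₀ (r₁*r₂+r₁*r₃+r₂*r₃) (-(r₁+r₂+r₃)) 1, c₀, ?_, ?_⟩
  · intro u hu
    have key : ∀ x : ℝ, cubeL d hd c₀ (r₁*r₂+r₁*r₃+r₂*r₃) (-(r₁+r₂+r₃)) 1 (momentE d x) + c₀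
        = (x - r₁) * (x - r₂) * (x - r₃) := by
      intro x; rw [cubeL_moment]; ring
    rcases mem_uedge.1 hu with h | h | h | h | h
    · rw [pos_w h, cubeL_w hd _ _ _ _ h]
      exact ⟨le_refl 0, fun _ => mem_uedge.2 (Or.inl h)⟩
    · subst h; rw [pos_v (hst.trans ht), key]
      refine ⟨hqs, fun he => ?_⟩
      rcases hzs he with h' | h'
      · exact mem_uedge.2 (Or.inr (Or.inl (by rw [h'])))
      · exact mem_uedge.2 (Or.inr (Or.inr (Or.inl (by rw [h']))))
    · subst h; rw [pos_v ht, key]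
      refine ⟨hqt, fun he => ?_⟩
      rcases hzt he with h' | h'
      · exact mem_uedge.2 (Or.inr (Or.inl (by rw [h'])))
      · exact mem_uedge.2 (Or.inr (Or.inr (Or.inl (by rw [h']))))
    · subst h; rw [pos_a hst ht, key]
      exact ⟨le_of_lt hqa, fun he => absurd he (ne_of_lt hqa)⟩
    · subst h; rw [pos_b hst ht, key]
      exact ⟨le_of_lt hqb, fun he => absurd he (ne_of_lt hqb)⟩
  · intro u hu
    have key : ∀ x : ℝ, cubeL d hd c₀ (r₁*r₂+r₁*r₃+r₂*r₃) (-(r₁+r₂+r₃)) 1 (momentE d x) + c₀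
        = (x - r₁) * (x - r₂) * (x - r₃) := by
      intro x; rw [cubeL_moment]; ring
    rcases mem_uedge.1 hu with h | h | h | h | h
    · rw [pos_w h, cubeL_w hd _ _ _ _ h]
      exact ⟨le_refl 0, fun _ => mem_uedge.2 (Or.inl h)⟩
    · subst h; rw [pos_v (hst'.trans ht'), key]
      refine ⟨hqs', fun he => ?_⟩
      rcases hzs' he with h' | h'
      · exact mem_uedge.2 (Or.inr (Or.inl (by rw [h'])))
      · exact mem_uedge.2 (Or.inr (Or.inr (Or.inl (by rw [h']))))
    · subst h; rw [pos_v ht', key]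
      refine ⟨hqt', fun he => ?_⟩
      rcases hzt' he with h' | h'
      · exact mem_uedge.2 (Or.inr (Or.inl (by rw [h'])))
      · exact mem_uedge.2 (Or.inr (Or.inr (Or.inl (by rw [h']))))
    · subst h; rw [pos_a hst' ht', key]
      exact ⟨le_of_lt hqa', fun he => absurd he.symm (ne_of_lt hqa')⟩
    · subst h; rw [pos_b hst' ht', key]
      exact ⟨le_of_lt hqb', fun he => absurd he.symm (ne_of_lt hqb')⟩
end

section Ineq

lemma cast_succ_le {s t : ℕ} (h : s < t) : (s:ℝ) + 1 ≤ t := by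
  have : (s+1 : ℕ) ≤ t := h
  exact_mod_cast this

lemma aPar_gt {s t : ℕ} (h : s < t) : (s:ℝ) < aPar s t := by
  have h1 := cast_succ_le h
  have h2 : 0 < 4*((t:ℝ) - s) := by linarith
  have : 0 < 1 / (4*((t:ℝ) - s)) := by positivity
  simp only [aPar]; linarith

lemma aPar_le {s t : ℕ} (h : s < t) : aPar s t ≤ (s:ℝ) + 1/4 := by
  have h1 := cast_succ_le h
  have h2 : 0 < 4*((t:ℝ) - s) := by linarith
  have : 1 / (4*((t:ℝ) - s)) ≤ 1/4 := by
    rw [div_le_div_iff₀ h2 (by norm_num)]; linarith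
  simp only [aPar]; linarith

lemma bPar_lt {s t : ℕ} (h : s < t) : bPar s t < (t:ℝ) := by
  have h1 := cast_succ_le h
  have h2 : 0 < 4*((t:ℝ) - s) := by linarith
  have : 0 < 1 / (4*((t:ℝ) - s)) := by positivity
  simp only [bPar]; linarith

lemma bPar_ge {s t : ℕ} (h : s < t) : (t:ℝ) - 1/4 ≤ bPar s t := by
  have h1 := cast_succ_le h
  have h2 : 0 < 4*((t:ℝ) - s) := by linarith
  have : 1 / (4*((t:ℝ) - s)) ≤ 1/4 := by
    rw [div_le_div_iff₀ h2 (by norm_num)]; linarith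
  simp only [bPar]; linarith

lemma aPar_anti {s t t' : ℕ} (h : s < t) (h' : t < t') : aPar s t' < aPar s t := by
  have h1 := cast_succ_le h
  have h2 := cast_succ_le h'
  have h3 : 0 < 4*((t:ℝ) - s) := by linarith
  have h4 : 4*((t:ℝ) - s) < 4*((t':ℝ) - s) := by linarith
  have := one_div_lt_one_div_of_lt h3 h4
  simp only [aPar]; linarith

lemma bPar_anti {s s' t : ℕ} (h : s < s') (h' : s' < t) : bPar s' t < bPar s t := by
  have h1 := cast_succ_le h
  have h2 := cast_succ_le h'
  have h3 : 0 < 4*((t:ℝ) - s') := by linarith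
  have h4 : 4*((t:ℝ) - s') < 4*((t:ℝ) - s) := by linarith
  have := one_div_lt_one_div_of_lt h3 h4
  simp only [bPar]; linarith

lemma mul3_nnn {x a b c : ℝ} (h1 : x < a) (h2 : x < b) (h3 : x < c) :
    (x-a)*(x-b)*(x-c) < 0 := by
  nlinarith [mul_pos (mul_pos (sub_pos.2 h1) (sub_pos.2 h2)) (sub_pos.2 h3)]

lemma mul3_pnn {x a b c : ℝ} (h1 : a < x) (h2 : x < b) (h3 : x < c) :
    0 < (x-a)*(x-b)*(x-c) := by
  nlinarith [mul_pos (mul_pos (sub_pos.2 h1) (sub_pos.2 h2)) (sub_pos.2 h3)]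

lemma mul3_ppn {x a b c : ℝ} (h1 : a < x) (h2 : b < x) (h3 : x < c) :
    (x-a)*(x-b)*(x-c) < 0 := by
  nlinarith [mul_pos (mul_pos (sub_pos.2 h1) (sub_pos.2 h2)) (sub_pos.2 h3)]

lemma mul3_ppp {x a b c : ℝ} (h1 : a < x) (h2 : b < x) (h3 : c < x) :
    0 < (x-a)*(x-b)*(x-c) := by
  exact mul_pos (mul_pos (sub_pos.2 h1) (sub_pos.2 h2)) (sub_pos.2 h3)

end Ineq

section Cases
variable {d m : ℕ} (hd : 3 ≤ d)
include hd

lemma sep_case1 {s t s' t' : ℕ} (hst : s < t) (ht : t < m) (hst' : s' < t')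
    (ht' : t' < m) (h : t < s') :
    SepPred d m (uedge d m s t) (uedge d m s' t') := by
  have c1 := cast_succ_le hst; have c2 := cast_succ_le hst'; have c3 := cast_succ_le h
  have a1 := aPar_gt hst; have a2 := aPar_le hst
  have b1 := bPar_lt hst; have b2 := bPar_ge hst
  have a1' := aPar_gt hst'; have a2' := aPar_le hst'
  have b1' := bPar_lt hst'; have b2' := bPar_ge hst'
  set r : ℝ := ((t:ℝ) + s')/2 with hr
  have Hs : ((s:ℝ) - r)*((s:ℝ) - r)*((s:ℝ) - r) < 0 :=
    mul3_nnn (by linarith) (by linarith) (by linarith)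
  have Ht : ((t:ℝ) - r)*((t:ℝ) - r)*((t:ℝ) - r) < 0 :=
    mul3_nnn (by linarith) (by linarith) (by linarith)
  have Ha : (aPar s t - r)*(aPar s t - r)*(aPar s t - r) < 0 :=
    mul3_nnn (by linarith) (by linarith) (by linarith)
  have Hb : (bPar s t - r)*(bPar s t - r)*(bPar s t - r) < 0 :=
    mul3_nnn (by linarith) (by linarith) (by linarith)
  have Hs' : 0 < ((s':ℝ) - r)*((s':ℝ) - r)*((s':ℝ) - r) :=
    mul3_ppp (by linarith) (by linarith) (by linarith)
  have Ht' : 0 < ((t':ℝ) - r)*((t':ℝ) - r)*((t':ℝ) - r) :=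
    mul3_ppp (by linarith) (by linarith) (by linarith)
  have Ha' : 0 < (aPar s' t' - r)*(aPar s' t' - r)*(aPar s' t' - r) :=
    mul3_ppp (by linarith) (by linarith) (by linarith)
  have Hb' : 0 < (bPar s' t' - r)*(bPar s' t' - r)*(bPar s' t' - r) :=
    mul3_ppp (by linarith) (by linarith) (by linarith)
  exact sep_of_roots hd hst ht hst' ht' r r r Hs.le Ht.le Hs'.le Ht'.le Ha Hb Ha' Hb'
    (fun he => absurd he Hs.ne) (fun he => absurd he Ht.ne)
    (fun he => absurd he Hs'.ne') (fun he => absurd he Ht'.ne')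

lemma sep_case3 {s t t' : ℕ} (hst : s < t) (ht : t < m) (htt' : t < t')
    (ht' : t' < m) :
    SepPred d m (uedge d m s t) (uedge d m t t') := by
  have hst' : t < t' := htt'
  have c1 := cast_succ_le hst; have c2 := cast_succ_le htt'
  have a1 := aPar_gt hst; have a2 := aPar_le hst
  have b1 := bPar_lt hst; have b2 := bPar_ge hst
  have a1' := aPar_gt htt'; have a2' := aPar_le htt'
  have b1' := bPar_lt htt'; have b2' := bPar_ge htt'
  set r : ℝ := (t:ℝ) with hr
  have Hs : ((s:ℝ) - r)*((s:ℝ) - r)*((s:ℝ) - r) < 0 :=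
    mul3_nnn (by linarith) (by linarith) (by linarith)
  have Ht0 : ((t:ℝ) - r)*((t:ℝ) - r)*((t:ℝ) - r) = 0 := by rw [hr]; ring
  have Ha : (aPar s t - r)*(aPar s t - r)*(aPar s t - r) < 0 :=
    mul3_nnn (by linarith) (by linarith) (by linarith)
  have Hb : (bPar s t - r)*(bPar s t - r)*(bPar s t - r) < 0 :=
    mul3_nnn (by linarith) (by linarith) (by linarith)
  have Ht' : 0 < ((t':ℝ) - r)*((t':ℝ) - r)*((t':ℝ) - r) :=
    mul3_ppp (by linarith) (by linarith) (by linarith)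
  have Ha' : 0 < (aPar t t' - r)*(aPar t t' - r)*(aPar t t' - r) :=
    mul3_ppp (by linarith) (by linarith) (by linarith)
  have Hb' : 0 < (bPar t t' - r)*(bPar t t' - r)*(bPar t t' - r) :=
    mul3_ppp (by linarith) (by linarith) (by linarith)
  exact sep_of_roots hd hst ht htt' ht' r r r Hs.le Ht0.le Ht0.ge Ht'.le Ha Hb Ha' Hb'
    (fun he => absurd he Hs.ne) (fun _ => Or.inl rfl)
    (fun _ => Or.inr rfl) (fun he => absurd he Ht'.ne')

lemma sep_case5 {s t t' : ℕ} (hst : s < t) (ht : t < m) (htt' : t < t')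
    (ht' : t' < m) :
    SepPred d m (uedge d m s t) (uedge d m s t') := by
  have hst' : s < t' := hst.trans htt'
  have c1 := cast_succ_le hst; have c2 := cast_succ_le htt'
  have a1 := aPar_gt hst; have a2 := aPar_le hst
  have b1 := bPar_lt hst; have b2 := bPar_ge hst
  have a1' := aPar_gt hst'; have a2' := aPar_le hst'
  have b1' := bPar_lt hst'; have b2' := bPar_ge hst'
  have anti := aPar_anti hst htt'
  set r₁ : ℝ := (aPar s t' + aPar s t)/2 with hr₁
  set r₂ : ℝ := ((t:ℝ) + bPar s t')/2 with hr₂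
  have Hs0 : ((s:ℝ) - s)*((s:ℝ) - r₁)*((s:ℝ) - r₂) = 0 := by ring
  have Ha : (aPar s t - s)*(aPar s t - r₁)*(aPar s t - r₂) < 0 :=
    mul3_ppn (by linarith) (by linarith) (by linarith)
  have Hb : (bPar s t - s)*(bPar s t - r₁)*(bPar s t - r₂) < 0 :=
    mul3_ppn (by linarith) (by linarith) (by linarith)
  have Ht : ((t:ℝ) - s)*((t:ℝ) - r₁)*((t:ℝ) - r₂) < 0 :=
    mul3_ppn (by linarith) (by linarith) (by linarith)
  have Ha' : 0 < (aPar s t' - s)*(aPar s t' - r₁)*(aPar s t' - r₂) :=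
    mul3_pnn (by linarith) (by linarith) (by linarith)
  have Hb' : 0 < (bPar s t' - s)*(bPar s t' - r₁)*(bPar s t' - r₂) :=
    mul3_ppp (by linarith) (by linarith) (by linarith)
  have Ht' : 0 < ((t':ℝ) - s)*((t':ℝ) - r₁)*((t':ℝ) - r₂) :=
    mul3_ppp (by linarith) (by linarith) (by linarith)
  exact sep_of_roots hd hst ht hst' ht' (s:ℝ) r₁ r₂ Hs0.le Ht.le Hs0.ge Ht'.le Ha Hb Ha' Hb'
    (fun _ => Or.inl rfl) (fun he => absurd he Ht.ne)
    (fun _ => Or.inl rfl) (fun he => absurd he Ht'.ne')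

lemma sep_case6 {s s' t : ℕ} (hss' : s < s') (hs't : s' < t) (ht : t < m) :
    SepPred d m (uedge d m s t) (uedge d m s' t) := by
  have hst : s < t := hss'.trans hs't
  have c1 := cast_succ_le hss'; have c2 := cast_succ_le hs't
  have a1 := aPar_gt hst; have a2 := aPar_le hst
  have b1 := bPar_lt hst; have b2 := bPar_ge hst
  have a1' := aPar_gt hs't; have a2' := aPar_le hs't
  have b1' := bPar_lt hs't; have b2' := bPar_ge hs't
  have anti := bPar_anti hss' hs't
  set r₁ : ℝ := (aPar s t + (s':ℝ))/2 with hr₁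
  set r₂ : ℝ := (bPar s' t + bPar s t)/2 with hr₂
  have Hs : ((s:ℝ) - r₁)*((s:ℝ) - r₂)*((s:ℝ) - t) < 0 :=
    mul3_nnn (by linarith) (by linarith) (by linarith)
  have Ha : (aPar s t - r₁)*(aPar s t - r₂)*(aPar s t - t) < 0 :=
    mul3_nnn (by linarith) (by linarith) (by linarith)
  have Hb : (bPar s t - r₁)*(bPar s t - r₂)*(bPar s t - t) < 0 :=
    mul3_ppn (by linarith) (by linarith) (by linarith)
  have Ht0 : ((t:ℝ) - r₁)*((t:ℝ) - r₂)*((t:ℝ) - t) = 0 := by ring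
  have Hs' : 0 < ((s':ℝ) - r₁)*((s':ℝ) - r₂)*((s':ℝ) - t) :=
    mul3_pnn (by linarith) (by linarith) (by linarith)
  have Ha' : 0 < (aPar s' t - r₁)*(aPar s' t - r₂)*(aPar s' t - t) :=
    mul3_pnn (by linarith) (by linarith) (by linarith)
  have Hb' : 0 < (bPar s' t - r₁)*(bPar s' t - r₂)*(bPar s' t - t) :=
    mul3_pnn (by linarith) (by linarith) (by linarith)
  exact sep_of_roots hd hst ht hs't ht r₁ r₂ (t:ℝ) Hs.le Ht0.le Hs'.le Ht0.ge Ha Hb Ha' Hb'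
    (fun he => absurd he Hs.ne) (fun _ => Or.inr rfl)
    (fun he => absurd he Hs'.ne') (fun _ => Or.inr rfl)

lemma sep_case7 {s s' t t' : ℕ} (hss' : s < s') (hs't : s' < t) (htt' : t < t')
    (ht : t < m) (ht' : t' < m) :
    SepPred d m (uedge d m s t) (uedge d m s' t') := by
  have hst : s < t := hss'.trans hs't
  have hst' : s' < t' := hs't.trans htt'
  have c1 := cast_succ_le hss'; have c2 := cast_succ_le hs't; have c3 := cast_succ_le htt'
  have a1 := aPar_gt hst; have a2 := aPar_le hst
  have b1 := bPar_lt hst; have b2 := bPar_ge hst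
  have a1' := aPar_gt hst'; have a2' := aPar_le hst'
  have b1' := bPar_lt hst'; have b2' := bPar_ge hst'
  set r₁ : ℝ := (aPar s t + (s':ℝ))/2 with hr₁
  set r₂ : ℝ := (aPar s' t' + bPar s t)/2 with hr₂
  set r₃ : ℝ := ((t:ℝ) + bPar s' t')/2 with hr₃
  have Hs : ((s:ℝ) - r₁)*((s:ℝ) - r₂)*((s:ℝ) - r₃) < 0 :=
    mul3_nnn (by linarith) (by linarith) (by linarith)
  have Ha : (aPar s t - r₁)*(aPar s t - r₂)*(aPar s t - r₃) < 0 :=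
    mul3_nnn (by linarith) (by linarith) (by linarith)
  have Hb : (bPar s t - r₁)*(bPar s t - r₂)*(bPar s t - r₃) < 0 :=
    mul3_ppn (by linarith) (by linarith) (by linarith)
  have Ht : ((t:ℝ) - r₁)*((t:ℝ) - r₂)*((t:ℝ) - r₃) < 0 :=
    mul3_ppn (by linarith) (by linarith) (by linarith)
  have Hs' : 0 < ((s':ℝ) - r₁)*((s':ℝ) - r₂)*((s':ℝ) - r₃) :=
    mul3_pnn (by linarith) (by linarith) (by linarith)
  have Ha' : 0 < (aPar s' t' - r₁)*(aPar s' t' - r₂)*(aPar s' t' - r₃) :=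
    mul3_pnn (by linarith) (by linarith) (by linarith)
  have Hb' : 0 < (bPar s' t' - r₁)*(bPar s' t' - r₂)*(bPar s' t' - r₃) :=
    mul3_ppp (by linarith) (by linarith) (by linarith)
  have Ht' : 0 < ((t':ℝ) - r₁)*((t':ℝ) - r₂)*((t':ℝ) - r₃) :=
    mul3_ppp (by linarith) (by linarith) (by linarith)
  exact sep_of_roots hd hst ht hst' ht' r₁ r₂ r₃ Hs.le Ht.le Hs'.le Ht'.le Ha Hb Ha' Hb'
    (fun he => absurd he Hs.ne) (fun he => absurd he Ht.ne)
    (fun he => absurd he Hs'.ne') (fun he => absurd he Ht'.ne')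

lemma sep_case8 {s s' t t' : ℕ} (hss' : s < s') (hs't' : s' < t') (ht't : t' < t)
    (ht : t < m) :
    SepPred d m (uedge d m s t) (uedge d m s' t') := by
  have hst : s < t := by omega
  have ht' : t' < m := ht't.trans ht
  have c1 := cast_succ_le hss'; have c2 := cast_succ_le hs't'; have c3 := cast_succ_le ht't
  have a1 := aPar_gt hst; have a2 := aPar_le hst
  have b1 := bPar_lt hst; have b2 := bPar_ge hst
  have a1' := aPar_gt hs't'; have a2' := aPar_le hs't'
  have b1' := bPar_lt hs't'; have b2' := bPar_ge hs't'
  have c4 : (s:ℝ) + 1 ≤ t := cast_succ_le hst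
  set r₁ : ℝ := (aPar s t + (s':ℝ))/2 with hr₁
  set r₂ : ℝ := ((t':ℝ) + bPar s t)/2 with hr₂
  set r₃ : ℝ := (t:ℝ) + 1 with hr₃
  have Hs : ((s:ℝ) - r₁)*((s:ℝ) - r₂)*((s:ℝ) - r₃) < 0 :=
    mul3_nnn (by linarith) (by linarith) (by linarith)
  have Ha : (aPar s t - r₁)*(aPar s t - r₂)*(aPar s t - r₃) < 0 :=
    mul3_nnn (by linarith) (by linarith) (by linarith)
  have Hb : (bPar s t - r₁)*(bPar s t - r₂)*(bPar s t - r₃) < 0 :=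
    mul3_ppn (by linarith) (by linarith) (by linarith)
  have Ht : ((t:ℝ) - r₁)*((t:ℝ) - r₂)*((t:ℝ) - r₃) < 0 :=
    mul3_ppn (by linarith) (by linarith) (by linarith)
  have Hs' : 0 < ((s':ℝ) - r₁)*((s':ℝ) - r₂)*((s':ℝ) - r₃) :=
    mul3_pnn (by linarith) (by linarith) (by linarith)
  have Ha' : 0 < (aPar s' t' - r₁)*(aPar s' t' - r₂)*(aPar s' t' - r₃) :=
    mul3_pnn (by linarith) (by linarith) (by linarith)
  have Hb' : 0 < (bPar s' t' - r₁)*(bPar s' t' - r₂)*(bPar s' t' - r₃) :=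
    mul3_pnn (by linarith) (by linarith) (by linarith)
  have Ht' : 0 < ((t':ℝ) - r₁)*((t':ℝ) - r₂)*((t':ℝ) - r₃) :=
    mul3_pnn (by linarith) (by linarith) (by linarith)
  exact sep_of_roots hd hst ht hs't' ht' r₁ r₂ r₃ Hs.le Ht.le Hs'.le Ht'.le Ha Hb Ha' Hb'
    (fun he => absurd he Hs.ne) (fun he => absurd he Ht.ne)
    (fun he => absurd he Hs'.ne') (fun he => absurd he Ht'.ne')

lemma main_sep_lex {s t s' t' : ℕ} (hst : s < t) (ht : t < m) (hst' : s' < t')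
    (ht' : t' < m) (hlex : s < s' ∨ (s = s' ∧ t < t')) :
    SepPred d m (uedge d m s t) (uedge d m s' t') := by
  rcases hlex with h | ⟨rfl, h3⟩
  · rcases lt_trichotomy t s' with h2 | h2 | h2
    · exact sep_case1 hd hst ht hst' ht' h2
    · subst h2; exact sep_case3 hd hst ht hst' ht'
    · rcases lt_trichotomy t t' with h3 | h3 | h3
      · exact sep_case7 hd h h2 h3 ht ht'
      · subst h3; exact sep_case6 hd h h2 ht
      · exact sep_case8 hd h hst' h3 ht
  · exact sep_case5 hd hst ht h3 ht'

lemma main_sep {s t s' t' : ℕ} (hst : s < t) (ht : t < m) (hst' : s' < t')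
    (ht' : t' < m) (hne : ¬(s = s' ∧ t = t')) :
    SepPred d m (uedge d m s t) (uedge d m s' t') := by
  rcases lt_trichotomy s s' with h | h | h
  · exact main_sep_lex hd hst ht hst' ht' (Or.inl h)
  · rcases lt_trichotomy t t' with h3 | h3 | h3
    · exact main_sep_lex hd hst ht hst' ht' (Or.inr ⟨h, h3⟩)
    · exact absurd ⟨h, h3⟩ hne
    · exact (main_sep_lex hd hst' ht' hst ht (Or.inr ⟨h.symm, h3⟩)).symm
  · exact (main_sep_lex hd hst' ht' hst ht (Or.inl h)).symm

end Cases

section Rank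

variable {d m : ℕ}

def eVec (d k : ℕ) : EuclideanSpace ℝ (Fin d) := WithLp.toLp 2 (fun i : Fin d => if (i:ℕ) = k then 1 else 0)

lemma wVec_eVec (r : ℕ) : wVec d r = eVec d (3 + r) := rfl

lemma fin_val_cases (i : Fin d) :
    (i:ℕ) = 0 ∨ (i:ℕ) = 1 ∨ (i:ℕ) = 2 ∨ (3 ≤ (i:ℕ)) := by omega

lemma momentE_comb (t : ℝ) :
    momentE d t = t • eVec d 0 + t^2 • eVec d 1 + t^3 • eVec d 2 := by
  ext i
  simp only [momentE, eVec, PiLp.add_apply, PiLp.smul_apply, smul_eq_mul, PiLp.toLp_apply]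
  rcases fin_val_cases i with h | h | h | h
  · simp [h]
  · simp [h]
  · simp [h]
  · have h0 : ¬((i:ℕ) = 0) := by omega
    have h1 : ¬((i:ℕ) = 1) := by omega
    have h2 : ¬((i:ℕ) = 2) := by omega
    simp [h0, h1, h2]

lemma vectorSpan_top_of (hd : 3 ≤ d) (S : Set (EuclideanSpace ℝ (Fin d)))
    (t₀ t₁ t₂ t₃ : ℝ) (h01 : t₀ < t₁) (h12 : t₁ < t₂) (h23 : t₂ < t₃)
    (hW : ∀ r, r < d - 3 → wVec d r ∈ S)
    (hm0 : momentE d t₀ ∈ S) (hm1 : momentE d t₁ ∈ S)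
    (hm2 : momentE d t₂ ∈ S) (hm3 : momentE d t₃ ∈ S) :
    vectorSpan ℝ S = ⊤ := by
  set V := vectorSpan ℝ S with hV
  have hδ : ∀ t : ℝ, momentE d t ∈ S → momentE d t - momentE d t₀ ∈ V := by
    intro t htS
    have := vsub_mem_vectorSpan ℝ htS hm0
    rwa [vsub_eq_sub] at this
  have hδ1 := hδ t₁ hm1
  have hδ2 := hδ t₂ hm2
  have hδ3 := hδ t₃ hm3
  have hDpos : 0 < (t₁-t₀)*(t₂-t₀)*(t₃-t₀)*(t₂-t₁)*(t₃-t₁)*(t₃-t₂) := by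
    apply mul_pos; apply mul_pos; apply mul_pos; apply mul_pos; apply mul_pos
    all_goals linarith
  have hDne : (t₁-t₀)*(t₂-t₀)*(t₃-t₀)*(t₂-t₁)*(t₃-t₁)*(t₃-t₂) ≠ 0 := ne_of_gt hDpos
  have coordδ : ∀ (t : ℝ) (i : Fin d),
      (momentE d t - momentE d t₀) i =
        if (i:ℕ) = 0 then t - t₀ else if (i:ℕ) = 1 then t^2 - t₀^2
          else if (i:ℕ) = 2 then t^3 - t₀^3 else 0 := by
    intro t i
    simp only [PiLp.sub_apply, momentE, PiLp.toLp_apply]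
    rcases fin_val_cases i with h | h | h | h
    · simp [h]
    · simp [h]
    · simp [h]
    · have h0 : ¬((i:ℕ) = 0) := by omega
      have h1 : ¬((i:ℕ) = 1) := by omega
      have h2 : ¬((i:ℕ) = 2) := by omega
      simp [h0, h1, h2]
  have hmemD : ∀ (k : ℕ) (c₁ c₂ c₃ : ℝ),
      ((t₁-t₀)*(t₂-t₀)*(t₃-t₀)*(t₂-t₁)*(t₃-t₁)*(t₃-t₂)) • eVec d k =
        c₁ • (momentE d t₁ - momentE d t₀) + c₂ • (momentE d t₂ - momentE d t₀)
          + c₃ • (momentE d t₃ - momentE d t₀) → eVec d k ∈ V := by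
    intro k c₁ c₂ c₃ he
    have h2 : eVec d k = ((t₁-t₀)*(t₂-t₀)*(t₃-t₀)*(t₂-t₁)*(t₃-t₁)*(t₃-t₂))⁻¹ •
        (((t₁-t₀)*(t₂-t₀)*(t₃-t₀)*(t₂-t₁)*(t₃-t₁)*(t₃-t₂)) • eVec d k) := by
      rw [smul_smul, inv_mul_cancel₀ hDne, one_smul]
    rw [h2, he]
    exact V.smul_mem _ (V.add_mem (V.add_mem (V.smul_mem _ hδ1) (V.smul_mem _ hδ2))
      (V.smul_mem _ hδ3))
  have hslice : ∀ k, k < 3 → eVec d k ∈ V := by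
    intro k hk
    have hcoord : ∀ (k : ℕ) (c₁ c₂ c₃ : ℝ) (i : Fin d),
        (c₁ • (momentE d t₁ - momentE d t₀) + c₂ • (momentE d t₂ - momentE d t₀)
          + c₃ • (momentE d t₃ - momentE d t₀)) i =
        c₁ * ((momentE d t₁ - momentE d t₀) i) + c₂ * ((momentE d t₂ - momentE d t₀) i)
          + c₃ * ((momentE d t₃ - momentE d t₀) i) := by
      intro k c₁ c₂ c₃ i
      simp [PiLp.add_apply, PiLp.smul_apply]
    interval_cases k
    · apply hmemD 0 ((t₂^2-t₀^2)*(t₃^3-t₀^3) - (t₃^2-t₀^2)*(t₂^3-t₀^3))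
        ((t₃^2-t₀^2)*(t₁^3-t₀^3) - (t₁^2-t₀^2)*(t₃^3-t₀^3))
        ((t₁^2-t₀^2)*(t₂^3-t₀^3) - (t₂^2-t₀^2)*(t₁^3-t₀^3))
      ext i
      rw [hcoord 0, PiLp.smul_apply, coordδ, coordδ, coordδ]
      simp only [eVec, smul_eq_mul, PiLp.toLp_apply]
      rcases fin_val_cases i with h | h | h | h
      · simp only [h]; norm_num; ring
      · simp only [h]; norm_num; ring
      · simp only [h]; norm_num; ring
      · have h0 : ¬((i:ℕ) = 0) := by omega
        have h1 : ¬((i:ℕ) = 1) := by omega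
        have h2 : ¬((i:ℕ) = 2) := by omega
        simp [h0, h1, h2]
    · apply hmemD 1 ((t₃-t₀)*(t₂^3-t₀^3) - (t₂-t₀)*(t₃^3-t₀^3))
        ((t₁-t₀)*(t₃^3-t₀^3) - (t₃-t₀)*(t₁^3-t₀^3))
        ((t₂-t₀)*(t₁^3-t₀^3) - (t₁-t₀)*(t₂^3-t₀^3))
      ext i
      rw [hcoord 1, PiLp.smul_apply, coordδ, coordδ, coordδ]
      simp only [eVec, smul_eq_mul, PiLp.toLp_apply]
      rcases fin_val_cases i with h | h | h | h
      · simp only [h]; norm_num; ring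
      · simp only [h]; norm_num; ring
      · simp only [h]; norm_num; ring
      · have h0 : ¬((i:ℕ) = 0) := by omega
        have h1 : ¬((i:ℕ) = 1) := by omega
        have h2 : ¬((i:ℕ) = 2) := by omega
        simp [h0, h1, h2]
    · apply hmemD 2 ((t₂-t₀)*(t₃^2-t₀^2) - (t₃-t₀)*(t₂^2-t₀^2))
        ((t₃-t₀)*(t₁^2-t₀^2) - (t₁-t₀)*(t₃^2-t₀^2))
        ((t₁-t₀)*(t₂^2-t₀^2) - (t₂-t₀)*(t₁^2-t₀^2))
      ext i
      rw [hcoord 2, PiLp.smul_apply, coordδ, coordδ, coordδ]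
      simp only [eVec, smul_eq_mul, PiLp.toLp_apply]
      rcases fin_val_cases i with h | h | h | h
      · simp only [h]; norm_num; ring
      · simp only [h]; norm_num; ring
      · simp only [h]; norm_num; ring
      · have h0 : ¬((i:ℕ) = 0) := by omega
        have h1 : ¬((i:ℕ) = 1) := by omega
        have h2 : ¬((i:ℕ) = 2) := by omega
        simp [h0, h1, h2]
  have hall : ∀ i : Fin d, eVec d (i:ℕ) ∈ V := by
    intro i
    rcases Nat.lt_or_ge (i:ℕ) 3 with h | h
    · exact hslice _ h
    · have hr : (i:ℕ) - 3 < d - 3 := by omega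
      have hw : wVec d ((i:ℕ) - 3) - momentE d t₀ ∈ V := by
        have := vsub_mem_vectorSpan ℝ (hW _ hr) hm0
        rwa [vsub_eq_sub] at this
      have he : eVec d (i:ℕ) = (wVec d ((i:ℕ) - 3) - momentE d t₀)
          + (t₀ • eVec d 0 + t₀^2 • eVec d 1 + t₀^3 • eVec d 2) := by
        rw [← momentE_comb, wVec_eVec]
        have h3 : 3 + ((i:ℕ) - 3) = (i:ℕ) := by omega
        rw [h3]; abel
      rw [he]
      exact V.add_mem hw (V.add_mem (V.add_mem (V.smul_mem _ (hslice 0 (by norm_num)))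
        (V.smul_mem _ (hslice 1 (by norm_num)))) (V.smul_mem _ (hslice 2 (by norm_num))))
  rw [eq_top_iff]
  intro x _
  have hx : x = ∑ i : Fin d, x i • eVec d (i:ℕ) := by
    ext j
    simp [eVec, Fin.val_inj]
  rw [hx]
  exact Submodule.sum_mem _ fun i _ => V.smul_mem _ (hall i)

end Rank

section Assembly

variable {d m : ℕ}

lemma vectorSpan_uedge (hd : 3 ≤ d) {s t : ℕ} (hst : s < t) (ht : t < m) :
    vectorSpan ℝ (pos d m '' ↑(uedge d m s t)) = ⊤ := by
  have c1 := cast_succ_le hst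
  have a1 := aPar_gt hst; have a2 := aPar_le hst
  have b1 := bPar_lt hst; have b2 := bPar_ge hst
  apply vectorSpan_top_of hd _ (s:ℝ) (aPar s t) (bPar s t) (t:ℝ) a1 (by linarith) b1
  · intro r hr
    exact ⟨r, Finset.mem_coe.2 (mem_uedge.2 (Or.inl hr)), pos_w hr m⟩
  · exact ⟨vIdx d s, Finset.mem_coe.2 (mem_uedge.2 (Or.inr (Or.inl rfl))),
      pos_v (hst.trans ht)⟩
  · exact ⟨aIdx d m s t, Finset.mem_coe.2 (mem_uedge.2 (Or.inr (Or.inr (Or.inr (Or.inl rfl))))),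
      pos_a hst ht⟩
  · exact ⟨bIdx d m s t, Finset.mem_coe.2 (mem_uedge.2 (Or.inr (Or.inr (Or.inr (Or.inr rfl))))),
      pos_b hst ht⟩
  · exact ⟨vIdx d t, Finset.mem_coe.2 (mem_uedge.2 (Or.inr (Or.inr (Or.inl rfl)))), pos_v ht⟩

lemma rank_uedge (hd : 3 ≤ d) {s t : ℕ} (hst : s < t) (ht : t < m) :
    Module.finrank ℝ (affineSpan ℝ (pos d m '' ↑(uedge d m s t))).direction = d := by
  rw [direction_affineSpan, vectorSpan_uedge hd hst ht, finrank_top, finrank_euclideanSpace,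
    Fintype.card_fin]

lemma attachFin_inter {n : ℕ} (s s' : Finset ℕ) (h : ∀ x ∈ s, x < n) (h' : ∀ x ∈ s', x < n) :
    Finset.attachFin s h ∩ Finset.attachFin s' h' =
      Finset.attachFin (s ∩ s') (fun x hx => h x (Finset.mem_inter.1 hx).1) := by
  ext x
  simp [Finset.mem_attachFin, Finset.mem_inter]

lemma image_attachFin {n : ℕ} {X : Type*} (φ0 : ℕ → X) (s : Finset ℕ) (h : ∀ x ∈ s, x < n) :
    (fun x : Fin n => φ0 x.val) '' ↑(Finset.attachFin s h) = φ0 '' ↑s := by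
  ext y
  constructor
  · rintro ⟨u, hu, rfl⟩
    exact ⟨u.val, Finset.mem_coe.2 ((Finset.mem_attachFin h).1 (Finset.mem_coe.1 hu)), rfl⟩
  · rintro ⟨x, hx, rfl⟩
    exact ⟨⟨x, h x (Finset.mem_coe.1 hx)⟩, Finset.mem_coe.2 ((Finset.mem_attachFin h).2
      (Finset.mem_coe.1 hx)), rfl⟩

end Assembly
end SLB

open SLB in
/-- Corollary 3.6: `χˢ_{d,d+1}(n) ≥ ⌊√(n - d + 3)⌋ + d - 3` for `d ≥ 3`. -/
theorem strong_lower_bound_d_dplus1 (d n : ℕ) (hd : 3 ≤ d) (hn : d + 1 ≤ n) :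
    ∃ H : FinsetHypergraph (Fin n), H.IsUniform (d + 1) ∧ H.HasLinearEmbedding (d + 1) d ∧
      Nat.sqrt (n - d + 3) + d - 3 ≤ H.strongChromaticNumber := by
  classical
  set m := Nat.sqrt (n - d + 3) with hmdef
  have hm2 : 2 ≤ m := Nat.le_sqrt.2 (by omega)
  have hmsq : m * m ≤ n - d + 3 := by
    have := Nat.sqrt_le' (n - d + 3)
    rw [pow_two] at this
    exact this
  have hbudget : d - 3 + m * m ≤ n := by omega
  have hmm : m ≤ m * m := Nat.le_mul_of_pos_left m (by omega)
  -- the edges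
  set P : Finset (ℕ × ℕ) :=
    (Finset.range m ×ˢ Finset.range m).filter (fun p => p.1 < p.2) with hP
  have hmemP : ∀ p : ℕ × ℕ, p ∈ P ↔ p.1 < p.2 ∧ p.2 < m := by
    intro p
    simp only [hP, Finset.mem_filter, Finset.mem_product, Finset.mem_range]
    constructor
    · rintro ⟨⟨h1, h2⟩, h3⟩; exact ⟨h3, h2⟩
    · rintro ⟨h1, h2⟩; exact ⟨⟨by omega, h2⟩, h1⟩
  have hltn : ∀ p : ℕ × ℕ, ∀ x ∈ uedge d m p.1 p.2 ∩ Finset.range n, x < n := by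
    intro p x hx
    exact Finset.mem_range.1 (Finset.mem_inter.1 hx).2
  set eFin : ℕ × ℕ → Finset (Fin n) :=
    (fun p => Finset.attachFin (uedge d m p.1 p.2 ∩ Finset.range n) (hltn p)) with heFin
  have heFin_eq : ∀ p : ℕ × ℕ, p.1 < p.2 → p.2 < m →
      uedge d m p.1 p.2 ∩ Finset.range n = uedge d m p.1 p.2 := by
    intro p h1 h2
    apply Finset.inter_eq_left.2
    intro x hx
    exact Finset.mem_range.2 (uedge_lt h1 h2 hbudget x hx)
  refine ⟨⟨P.image eFin⟩, ?_, ?_, ?_⟩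
  · -- uniformity
    intro e he
    obtain ⟨p, hp, rfl⟩ := Finset.mem_image.1 he
    obtain ⟨h1, h2⟩ := (hmemP p).1 hp
    rw [heFin]
    simp only
    rw [Finset.card_attachFin, heFin_eq p h1 h2, card_uedge hd h1 h2]
  · -- embedding
    refine ⟨fun x : Fin n => pos d m x.val, ?_, ?_⟩
    · intro e he
      obtain ⟨p, hp, rfl⟩ := Finset.mem_image.1 he
      obtain ⟨h1, h2⟩ := (hmemP p).1 hp
      rw [heFin]
      simp only
      rw [image_attachFin]
      rw [heFin_eq p h1 h2, rank_uedge hd h1 h2]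
      omega
    · intro e₁ he₁ e₂ he₂
      obtain ⟨p, hp, rfl⟩ := Finset.mem_image.1 he₁
      obtain ⟨q, hq, rfl⟩ := Finset.mem_image.1 he₂
      obtain ⟨h1, h2⟩ := (hmemP p).1 hp
      obtain ⟨h3, h4⟩ := (hmemP q).1 hq
      by_cases hpq : p = q
      · subst hpq
        rw [Finset.inter_self]
        exact (Set.inter_self _).symm
      · have hne : ¬(p.1 = q.1 ∧ p.2 = q.2) := by
          intro ⟨ha, hb⟩
          exact hpq (Prod.ext ha hb)
        rw [heFin]
        simp only
        rw [attachFin_inter, image_attachFin, image_attachFin, image_attachFin]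
        rw [heFin_eq p h1 h2, heFin_eq q h3 h4]
        exact sep_to_hull (main_sep hd h1 h2 h3 h4 hne)
  · -- chromatic number
    apply le_csInf
    · exact ⟨n, ⟨fun x => x, fun e _ => fun a _ b _ h => h⟩⟩
    · rintro c ⟨κ, hκ⟩
      -- the special vertices
      have hsm : d - 3 + m ≤ n := by omega
      set S : Finset (Fin n) :=
        Finset.attachFin (Finset.range (d - 3 + m)) (fun x hx => by
          have := Finset.mem_range.1 hx; omega) with hS
      have find : ∀ a b : ℕ, a < d - 3 + m → b < d - 3 + m → a ≠ b →
          ∃ s t, s < t ∧ t < m ∧ a ∈ uedge d m s t ∧ b ∈ uedge d m s t := by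
        intro a b ha hb hne
        by_cases h1 : a < d - 3
        · by_cases h2 : b < d - 3
          · exact ⟨0, 1, by omega, by omega, mem_uedge.2 (Or.inl h1), mem_uedge.2 (Or.inl h2)⟩
          · by_cases h3 : b = d - 3
            · exact ⟨0, 1, by omega, by omega, mem_uedge.2 (Or.inl h1),
                mem_uedge.2 (Or.inr (Or.inl (by simp [vIdx]; omega)))⟩
            · exact ⟨0, b - (d - 3), by omega, by omega, mem_uedge.2 (Or.inl h1),
                mem_uedge.2 (Or.inr (Or.inr (Or.inl (by simp [vIdx]; omega))))⟩
        · by_cases h2 : b < d - 3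
          · by_cases h3 : a = d - 3
            · exact ⟨0, 1, by omega, by omega,
                mem_uedge.2 (Or.inr (Or.inl (by simp [vIdx]; omega))), mem_uedge.2 (Or.inl h2)⟩
            · exact ⟨0, a - (d - 3), by omega, by omega,
                mem_uedge.2 (Or.inr (Or.inr (Or.inl (by simp [vIdx]; omega)))),
                mem_uedge.2 (Or.inl h2)⟩
          · rcases Nat.lt_or_ge a b with h3 | h3
            · exact ⟨a - (d - 3), b - (d - 3), by omega, by omega,
                mem_uedge.2 (Or.inr (Or.inl (by simp [vIdx]; omega))),
                mem_uedge.2 (Or.inr (Or.inr (Or.inl (by simp [vIdx]; omega))))⟩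
            · exact ⟨b - (d - 3), a - (d - 3), by omega, by omega,
                mem_uedge.2 (Or.inr (Or.inr (Or.inl (by simp [vIdx]; omega)))),
                mem_uedge.2 (Or.inr (Or.inl (by simp [vIdx]; omega)))⟩
      have hinj : Set.InjOn κ ↑S := by
        intro u hu u' hu' heq
        by_contra hneq
        have hu1 : u.val < d - 3 + m := by
          have := (Finset.mem_attachFin _).1 (Finset.mem_coe.1 hu)
          exact Finset.mem_range.1 this
        have hu2 : u'.val < d - 3 + m := by
          have := (Finset.mem_attachFin _).1 (Finset.mem_coe.1 hu')
          exact Finset.mem_range.1 this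
        have hvalne : u.val ≠ u'.val := fun h => hneq (Fin.ext h)
        obtain ⟨s, t, hst, ht, hma, hmb⟩ := find u.val u'.val hu1 hu2 hvalne
        have hedge : eFin (s, t) ∈ P.image eFin :=
          Finset.mem_image.2 ⟨(s, t), (hmemP (s, t)).2 ⟨hst, ht⟩, rfl⟩
        have hmem1 : u ∈ eFin (s, t) := by
          rw [heFin]
          exact (Finset.mem_attachFin _).2 (by rw [heFin_eq (s, t) hst ht]; exact hma)
        have hmem2 : u' ∈ eFin (s, t) := by
          rw [heFin]
          exact (Finset.mem_attachFin _).2 (by rw [heFin_eq (s, t) hst ht]; exact hmb)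
        exact hneq (hκ (eFin (s, t)) hedge (Finset.mem_coe.2 hmem1) (Finset.mem_coe.2 hmem2) heq)
      have hcard : (S.image κ).card = d - 3 + m := by
        rw [Finset.card_image_of_injOn hinj, hS, Finset.card_attachFin, Finset.card_range]
      have : d - 3 + m ≤ c := by
        rw [← hcard]
        exact le_trans (Finset.card_le_univ _) (by simp)
      omega
end

section
/- For all natural numbers d, k, n with d ≥ 3, 2 ≤ k ≤ d and n ≥ k, there exists a k-uniform hypergraph H on n vertices that admits a linear embedding into ℝ^d and whose strong chromatic number equals n: χˢ(H) = n. (In the paper's notation: χˢ_{d,k}(n) = n for d ≥ 3 and k ≤ d.) -/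
/-- A hypergraph on a vertex type `V`: a finite set of edges, each a finite set of vertices. -/
structure FinHypergraph (V : Type) where
  edges : Finset (Finset V)

namespace FinHypergraph

variable {V : Type}

/-- `H` is `k`-uniform if every edge has exactly `k` vertices. -/
def IsUniform (H : FinHypergraph V) (k : ℕ) : Prop :=
  ∀ e ∈ H.edges, e.card = k

/-- A (linear) embedding of the `k`-uniform hypergraph `H` into `ℝ^d`:
a map `φ : V → ℝ^d` such that the affine span of every embedded edge has
dimension `k - 1`, and for any two edges the convex hulls intersect exactly in
the convex hull of the image of their common vertices. -/
def HasLinearEmbedding [DecidableEq V] (H : FinHypergraph V) (k d : ℕ) : Prop :=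
  ∃ φ : V → EuclideanSpace ℝ (Fin d),
    (∀ e ∈ H.edges,
      Module.finrank ℝ (affineSpan ℝ (φ '' (e : Set V))).direction = k - 1) ∧
    (∀ e₁ ∈ H.edges, ∀ e₂ ∈ H.edges,
      convexHull ℝ (φ '' ((e₁ ∩ e₂ : Finset V) : Set V)) =
        convexHull ℝ (φ '' (e₁ : Set V)) ∩ convexHull ℝ (φ '' (e₂ : Set V)))

/-- A strong `c`-coloring: a coloring of the vertices injective on every edge. -/
def StrongColorable (H : FinHypergraph V) (c : ℕ) : Prop :=
  ∃ κ : V → Fin c, ∀ e ∈ H.edges, Set.InjOn κ (e : Set V)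

/-- The strong chromatic number: least `c` admitting a strong `c`-coloring. -/
noncomputable def strongChromaticNumber (H : FinHypergraph V) : ℕ :=
  sInf {c | H.StrongColorable c}

/-- A weak `c`-coloring: a coloring of the vertices such that no edge is monochromatic. -/
def WeakColorable (H : FinHypergraph V) (c : ℕ) : Prop :=
  ∃ κ : V → Fin c, ∀ e ∈ H.edges, ∃ u ∈ e, ∃ v ∈ e, κ u ≠ κ v

/-- The weak chromatic number: least `c` admitting a weak `c`-coloring. -/
noncomputable def weakChromaticNumber (H : FinHypergraph V) : ℕ :=
  sInf {c | H.WeakColorable c}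

end FinHypergraph


open Finset

noncomputable instance euclDecEq (d : ℕ) : DecidableEq (EuclideanSpace ℝ (Fin d)) :=
  Classical.decEq _

section Phi

variable {d c n : ℕ}

/-- A linear functional on `ℝ^d` given by coefficients. -/
def lin (d : ℕ) (coef : Fin d → ℝ) : EuclideanSpace ℝ (Fin d) →ₗ[ℝ] ℝ where
  toFun x := ∑ i, coef i * x i
  map_add' x y := by simp [mul_add, Finset.sum_add_distrib]
  map_smul' r x := by simp [Finset.mul_sum]; congr 1; ext i; ring

lemma lin_single (coef : Fin d → ℝ) (j : Fin d) (r : ℝ) :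
    lin d coef (EuclideanSpace.single j r) = coef j * r := by
  simp only [lin, LinearMap.coe_mk, AddHom.coe_mk, EuclideanSpace.single_apply]
  rw [Finset.sum_eq_single j]
  · rw [if_pos rfl]
  · intro i _ hij; rw [if_neg hij, mul_zero]
  · simp

/-- The embedding: the first `c` vertices go to standard basis vectors, the
remaining vertices go to the moment curve in coordinates `c, c+1, c+2`. -/
noncomputable def phi (d c n : ℕ) (h : c + 3 ≤ d) : Fin n → EuclideanSpace ℝ (Fin d) := fun v =>
  if h' : (v : ℕ) < c then EuclideanSpace.single ⟨(v : ℕ), by omega⟩ 1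
  else ((v : ℕ) : ℝ) • EuclideanSpace.single ⟨c, by omega⟩ 1 +
    (((v : ℕ) : ℝ)) ^ 2 • EuclideanSpace.single ⟨c + 1, by omega⟩ 1 +
    (((v : ℕ) : ℝ)) ^ 3 • EuclideanSpace.single ⟨c + 2, by omega⟩ 1

lemma phi_apply_apex (h : c + 3 ≤ d) (v : Fin n) (hv : (v : ℕ) < c) (j : Fin d) :
    phi d c n h v j = if (j : ℕ) = (v : ℕ) then 1 else 0 := by
  rw [phi, dif_pos hv, EuclideanSpace.single_apply]
  simp [Fin.ext_iff]

lemma phi_apply_base (h : c + 3 ≤ d) (v : Fin n) (hv : ¬ (v : ℕ) < c) (j : Fin d) :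
    phi d c n h v j = if (j : ℕ) = c then ((v : ℕ) : ℝ) else if (j : ℕ) = c + 1
      then ((v : ℕ) : ℝ) ^ 2 else if (j : ℕ) = c + 2 then ((v : ℕ) : ℝ) ^ 3 else 0 := by
  rw [phi, dif_neg hv]
  simp only [PiLp.add_apply, PiLp.smul_apply, EuclideanSpace.single_apply, smul_eq_mul,
    Fin.ext_iff]
  split_ifs <;> first | (exfalso; omega) | ring

/-- Coefficient pattern for the affine functional used for separation. -/
def coefFn (d c : ℕ) (A B C D : ℝ) : Fin d → ℝ := fun i =>
  if (i : ℕ) < c then -A else if (i : ℕ) = c then B else if (i : ℕ) = c + 1 then C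
  else if (i : ℕ) = c + 2 then D else 0

lemma lin_phi_apex (h : c + 3 ≤ d) (A B C D : ℝ) (v : Fin n) (hv : (v : ℕ) < c) :
    lin d (coefFn d c A B C D) (phi d c n h v) = -A := by
  rw [phi, dif_pos hv, lin_single, coefFn]
  simp [hv]

lemma lin_phi_base (h : c + 3 ≤ d) (A B C D : ℝ) (v : Fin n) (hv : ¬ (v : ℕ) < c) :
    lin d (coefFn d c A B C D) (phi d c n h v) =
      B * ((v : ℕ) : ℝ) + C * ((v : ℕ) : ℝ) ^ 2 + D * ((v : ℕ) : ℝ) ^ 3 := by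
  rw [phi, dif_neg hv]
  have hc : ¬ (c < c) := lt_irrefl c
  have hc1 : ¬ (c + 1 < c) := by omega
  have hc2 : ¬ (c + 2 < c) := by omega
  simp only [map_add, map_smul, lin_single, coefFn, smul_eq_mul]
  norm_num [hc, hc1, hc2]
  ring

lemma phi_injective (h : c + 3 ≤ d) : Function.Injective (phi d c n h) := by
  intro v v' hvv
  by_contra hne
  have hval : (v : ℕ) ≠ (v' : ℕ) := fun hh => hne (Fin.ext hh)
  have happ : ∀ j : Fin d, phi d c n h v j = phi d c n h v' j := fun j => by rw [hvv]
  by_cases h1 : (v : ℕ) < c <;> by_cases h2 : (v' : ℕ) < c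
  · have := happ ⟨(v : ℕ), by omega⟩
    rw [phi_apply_apex h v h1, phi_apply_apex h v' h2] at this
    rw [if_pos rfl, if_neg hval] at this
    norm_num at this
  · have := happ ⟨(v : ℕ), by omega⟩
    rw [phi_apply_apex h v h1, phi_apply_base h v' h2] at this
    rw [if_pos rfl, if_neg (show ¬((v:ℕ) = c) by omega), if_neg (show ¬((v:ℕ) = c+1) by omega),
      if_neg (show ¬((v:ℕ) = c+2) by omega)] at this
    norm_num at this
  · have := happ ⟨(v' : ℕ), by omega⟩
    rw [phi_apply_base h v h1, phi_apply_apex h v' h2] at this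
    rw [if_pos rfl, if_neg (show ¬((v':ℕ) = c) by omega), if_neg (show ¬((v':ℕ) = c+1) by omega),
      if_neg (show ¬((v':ℕ) = c+2) by omega)] at this
    norm_num at this
  · have := happ ⟨c, by omega⟩
    rw [phi_apply_base h v h1, phi_apply_base h v' h2, if_pos rfl, if_pos rfl] at this
    exact hval (Nat.cast_injective this)

end Phi

section Sep

variable {W : Type*} [AddCommGroup W] [Module ℝ W] {V : Type} [DecidableEq V]

lemma sep_lemma [DecidableEq W] (φ : V → W) (e₁ e₂ : Finset V) (G : W →ₗ[ℝ] ℝ) (A : ℝ)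
    (h0 : ∀ v ∈ e₁, v ∈ e₂ → G (φ v) + A = 0)
    (hpos : ∀ v ∈ e₁, v ∉ e₂ → 0 < G (φ v) + A)
    (hneg : ∀ v ∈ e₂, v ∉ e₁ → G (φ v) + A < 0) :
    convexHull ℝ (φ '' ↑e₁) ∩ convexHull ℝ (φ '' ↑e₂) ⊆ convexHull ℝ (φ '' ↑(e₁ ∩ e₂)) := by
  intro x hx
  obtain ⟨hx₁, hx₂⟩ := hx
  rw [← Finset.coe_image, Finset.convexHull_eq] at hx₁ hx₂
  obtain ⟨w₁, hw₁0, hw₁1, hcm₁⟩ := hx₁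
  obtain ⟨w₂, hw₂0, hw₂1, hcm₂⟩ := hx₂
  have hsum : ∀ (e : Finset V) (w : W → ℝ), ∑ y ∈ e.image φ, w y = 1 →
      (e.image φ).centerMass w id = x → G x + A = ∑ y ∈ e.image φ, w y * (G y + A) := by
    intro e w hw1 hcm
    rw [Finset.centerMass_eq_of_sum_1 _ _ hw1] at hcm
    have hGx : G x = ∑ y ∈ e.image φ, w y * G y := by
      rw [← hcm, map_sum]
      simp [map_smul]
    simp only [mul_add, Finset.sum_add_distrib, ← Finset.sum_mul, hw1, one_mul, hGx]
  have h1 := hsum e₁ w₁ hw₁1 hcm₁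
  have h2 := hsum e₂ w₂ hw₂1 hcm₂
  have hge : 0 ≤ G x + A := by
    rw [h1]
    refine Finset.sum_nonneg fun y hy => ?_
    obtain ⟨v, hv, rfl⟩ := Finset.mem_image.1 hy
    by_cases hv2 : v ∈ e₂
    · rw [h0 v hv hv2, mul_zero]
    · exact mul_nonneg (hw₁0 _ hy) (le_of_lt (hpos v hv hv2))
  have hle : G x + A ≤ 0 := by
    rw [h2]
    refine Finset.sum_nonpos fun y hy => ?_
    obtain ⟨v, hv, rfl⟩ := Finset.mem_image.1 hy
    by_cases hv1 : v ∈ e₁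
    · rw [h0 v hv1 hv, mul_zero]
    · exact mul_nonpos_of_nonneg_of_nonpos (hw₂0 _ hy) (le_of_lt (hneg v hv hv1))
  have hzero : G x + A = 0 := le_antisymm hle hge
  -- each term in the e₁-representation vanishes
  have hterms : ∀ y ∈ e₁.image φ, w₁ y * (G y + A) = 0 := by
    have := (Finset.sum_eq_zero_iff_of_nonneg ?_).1 (h1 ▸ hzero)
    · exact this
    · intro y hy
      obtain ⟨v, hv, rfl⟩ := Finset.mem_image.1 hy
      by_cases hv2 : v ∈ e₂
      · rw [h0 v hv hv2, mul_zero]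
      · exact mul_nonneg (hw₁0 _ hy) (le_of_lt (hpos v hv hv2))
  -- weights vanish outside the image of the intersection
  have hvanish : ∀ y ∈ e₁.image φ, y ∉ (e₁ ∩ e₂).image φ → w₁ y = 0 := by
    intro y hy hyn
    obtain ⟨v, hv, rfl⟩ := Finset.mem_image.1 hy
    by_cases hv2 : v ∈ e₂
    · exact absurd (Finset.mem_image_of_mem φ (Finset.mem_inter.2 ⟨hv, hv2⟩)) hyn
    · have := hterms _ (Finset.mem_image_of_mem φ hv)
      rcases mul_eq_zero.1 this with h | h
      · exact h
      · exact absurd h (ne_of_gt (hpos v hv hv2))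
  have hsub : (e₁ ∩ e₂).image φ ⊆ e₁.image φ :=
    Finset.image_subset_image (Finset.inter_subset_left)
  have hsum1 : ∑ y ∈ (e₁ ∩ e₂).image φ, w₁ y = 1 := by
    rw [← hw₁1]
    exact (Finset.sum_subset hsub fun y hy hyn => hvanish y hy hyn).symm ▸ rfl
  have hx' : ((e₁ ∩ e₂).image φ).centerMass w₁ id = x := by
    rw [Finset.centerMass_eq_of_sum_1 _ _ hsum1]
    rw [Finset.centerMass_eq_of_sum_1 _ _ hw₁1] at hcm₁
    rw [← hcm₁]
    exact Finset.sum_subset hsub fun y hy hyn => by rw [hvanish y hy hyn, zero_smul]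
  rw [← Finset.coe_image]
  rw [← hx']
  exact Finset.centerMass_mem_convexHull _ (fun y hy => hw₁0 _ (hsub hy))
    (by rw [hsum1]; norm_num) (fun y hy => Finset.mem_coe.2 hy)

end Sep

/-- Value of the cubic with coefficients `A B C D` at `t`. -/
def pv (A B C D t : ℝ) : ℝ := A + B * t + C * t ^ 2 + D * t ^ 3

/-- A cubic separating two "edges" given by predicates on ℕ. -/
def SepPoly (A B C D : ℝ) (e₁ e₂ : ℕ → Prop) : Prop :=
  ∀ a : ℕ, (e₁ a → e₂ a → pv A B C D a = 0) ∧
    (e₁ a → ¬ e₂ a → 0 < pv A B C D a) ∧ (e₂ a → ¬ e₁ a → pv A B C D a < 0)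

abbrev tmem (u w : ℕ) : ℕ → Prop := fun a => a = u ∨ a = w ∨ a = w + 1
abbrev pmem (u w : ℕ) : ℕ → Prop := fun a => a = u ∨ a = w

lemma sepPoly_neg {A B C D : ℝ} {e₁ e₂ : ℕ → Prop} (h : SepPoly A B C D e₁ e₂) :
    SepPoly (-A) (-B) (-C) (-D) e₂ e₁ := by
  intro a
  obtain ⟨h0, hp, hn⟩ := h a
  have hval : pv (-A) (-B) (-C) (-D) a = -pv A B C D a := by simp [pv]; ring
  refine ⟨fun x y => ?_, fun x y => ?_, fun x y => ?_⟩ <;> rw [hval]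
  · rw [h0 y x]; ring
  · have := hn x y; linarith
  · have := hp x y; linarith

/-- Building a separating cubic from a factored form `s (t-α)(t-β)(t-γ)`. -/
lemma sepPoly_of_cubic (s α β γ : ℝ) (e₁ e₂ : ℕ → Prop)
    (h0 : ∀ a : ℕ, e₁ a → e₂ a → s * (((a:ℝ) - α) * ((a:ℝ) - β) * ((a:ℝ) - γ)) = 0)
    (hp : ∀ a : ℕ, e₁ a → ¬ e₂ a → 0 < s * (((a:ℝ) - α) * ((a:ℝ) - β) * ((a:ℝ) - γ)))
    (hn : ∀ a : ℕ, e₂ a → ¬ e₁ a → s * (((a:ℝ) - α) * ((a:ℝ) - β) * ((a:ℝ) - γ)) < 0) :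
    ∃ A B C D : ℝ, SepPoly A B C D e₁ e₂ := by
  refine ⟨-(s*α*β*γ), s*(α*β+α*γ+β*γ), -(s*(α+β+γ)), s, fun a => ?_⟩
  have key : pv (-(s*α*β*γ)) (s*(α*β+α*γ+β*γ)) (-(s*(α+β+γ))) s a
      = s * (((a:ℝ) - α) * ((a:ℝ) - β) * ((a:ℝ) - γ)) := by simp [pv]; ring
  exact ⟨fun x y => by rw [key]; exact h0 a x y, fun x y => by rw [key]; exact hp a x y,
    fun x y => by rw [key]; exact hn a x y⟩

lemma sepPoly_of_linear (b s : ℝ) (e₁ e₂ : ℕ → Prop)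
    (h0 : ∀ a : ℕ, e₁ a → e₂ a → b + s * a = 0)
    (hp : ∀ a : ℕ, e₁ a → ¬ e₂ a → 0 < b + s * a)
    (hn : ∀ a : ℕ, e₂ a → ¬ e₁ a → b + s * a < 0) :
    ∃ A B C D : ℝ, SepPoly A B C D e₁ e₂ := by
  refine ⟨b, s, 0, 0, fun a => ?_⟩
  have key : pv b s 0 0 a = b + s * a := by simp [pv]
  exact ⟨fun x y => by rw [key]; exact h0 a x y, fun x y => by rw [key]; exact hp a x y,
    fun x y => by rw [key]; exact hn a x y⟩

section SignHelpers

variable {X Y Z : ℝ}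

lemma mul3_pos_ppp (hx : 0 < X) (hy : 0 < Y) (hz : 0 < Z) : 0 < X * Y * Z :=
  mul_pos (mul_pos hx hy) hz
lemma mul3_pos_pnn (hx : 0 < X) (hy : Y < 0) (hz : Z < 0) : 0 < X * Y * Z :=
  mul_pos_of_neg_of_neg (mul_neg_of_pos_of_neg hx hy) hz
lemma mul3_pos_npn (hx : X < 0) (hy : 0 < Y) (hz : Z < 0) : 0 < X * Y * Z :=
  mul_pos_of_neg_of_neg (mul_neg_of_neg_of_pos hx hy) hz
lemma mul3_pos_nnp (hx : X < 0) (hy : Y < 0) (hz : 0 < Z) : 0 < X * Y * Z :=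
  mul_pos (mul_pos_of_neg_of_neg hx hy) hz
lemma mul3_neg_npp (hx : X < 0) (hy : 0 < Y) (hz : 0 < Z) : X * Y * Z < 0 :=
  mul_neg_of_neg_of_pos (mul_neg_of_neg_of_pos hx hy) hz
lemma mul3_neg_pnp (hx : 0 < X) (hy : Y < 0) (hz : 0 < Z) : X * Y * Z < 0 :=
  mul_neg_of_neg_of_pos (mul_neg_of_pos_of_neg hx hy) hz
lemma mul3_neg_ppn (hx : 0 < X) (hy : 0 < Y) (hz : Z < 0) : X * Y * Z < 0 :=
  mul_neg_of_pos_of_neg (mul_pos hx hy) hz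
lemma mul3_neg_nnn (hx : X < 0) (hy : Y < 0) (hz : Z < 0) : X * Y * Z < 0 :=
  mul_neg_of_pos_of_neg (mul_pos_of_neg_of_neg hx hy) hz

lemma neg2_pos (h : X < 0) : 0 < -2 * X := by linarith
lemma neg2_neg (h : 0 < X) : -2 * X < 0 := by linarith
lemma one1_pos (h : 0 < X) : 0 < 1 * X := by linarith
lemma one1_neg (h : X < 0) : 1 * X < 0 := by linarith
lemma neg1_pos (h : X < 0) : 0 < -1 * X := by linarith
lemma neg1_neg (h : 0 < X) : -1 * X < 0 := by linarith

end SignHelpers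

/-- Separating cubic for two triangle edges `{u,w,w+1}`, `{u',w',w'+1}` with `w < w'`. -/
lemma tri_sep_lt (u w u' w' : ℕ) (h1 : u < w) (h2 : u' < w') (h3 : w < w') :
    ∃ A B C D : ℝ, SepPoly A B C D (tmem u w) (tmem u' w') := by
  have cu : (u:ℝ) < w := by exact_mod_cast h1
  have cu' : (u':ℝ) < w' := by exact_mod_cast h2
  have cw : (w:ℝ) < w' := by exact_mod_cast h3
  by_cases hA : u' = u
  · -- T2a : p = (M-2t)(t-u)²
    refine sepPoly_of_cubic (-2) (((w:ℝ)+(w':ℝ)+1)/2) u u _ _ ?_ ?_ ?_ <;>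
      intro a ha hb <;> unfold tmem at ha hb
    · rcases ha with h | h | h
      · rw [h]; push_cast; ring
      · exfalso; omega
      · have e : w' = w + 1 := by omega
        rw [h, e]; push_cast; ring
    · rcases ha with h | h | h
      · exfalso; omega
      · rw [h]; apply neg2_pos; apply mul3_neg_npp <;> linarith
      · have cw1 : (w:ℝ) + 1 < w' := by exact_mod_cast (show w + 1 < w' by omega)
        rw [h]; push_cast; apply neg2_pos; apply mul3_neg_npp <;> linarith
    · rcases ha with h | h | h
      · exfalso; omega
      · have cw1 : (w:ℝ) + 2 ≤ w' := by exact_mod_cast (show w + 2 ≤ w' by omega)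
        rw [h]; apply neg2_neg; apply mul3_pos_ppp <;> linarith
      · rw [h]; push_cast; apply neg2_neg; apply mul3_pos_ppp <;> linarith
  · by_cases hB : u' = w
    · -- T2b : p = (M-2t)(t-w)(t-(u+w)/2)
      refine sepPoly_of_cubic (-2) (((w:ℝ)+(w':ℝ)+1)/2) w (((u:ℝ)+w)/2) _ _ ?_ ?_ ?_ <;>
        intro a ha hb <;> unfold tmem at ha hb
      · rcases ha with h | h | h
        · exfalso; omega
        · rw [h]; push_cast; ring
        · have e : w' = w + 1 := by omega
          rw [h, e]; push_cast; ring
      · rcases ha with h | h | h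
        · rw [h]; apply neg2_pos; apply mul3_neg_nnn <;> linarith
        · exfalso; omega
        · have cw1 : (w:ℝ) + 1 < w' := by exact_mod_cast (show w + 1 < w' by omega)
          rw [h]; push_cast; apply neg2_pos; apply mul3_neg_npp <;> linarith
      · rcases ha with h | h | h
        · exfalso; omega
        · have cw1 : (w:ℝ) + 2 ≤ w' := by exact_mod_cast (show w + 2 ≤ w' by omega)
          rw [h]; apply neg2_neg; apply mul3_pos_ppp <;> linarith
        · rw [h]; push_cast; apply neg2_neg; apply mul3_pos_ppp <;> linarith
    · by_cases hC : u' = w + 1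
      · -- T2c : p = (M-2t)(t-(w+1))(t-(w+1/2))
        have hw1 : w + 1 < w' := by omega
        have cw1 : (w:ℝ) + 1 < w' := by exact_mod_cast hw1
        refine sepPoly_of_cubic (-2) (((w:ℝ)+(w':ℝ)+1)/2) ((w:ℝ)+1) ((w:ℝ)+1/2) _ _ ?_ ?_ ?_ <;>
          intro a ha hb <;> unfold tmem at ha hb
        · rcases ha with h | h | h
          · exfalso; omega
          · exfalso; omega
          · rw [h]; push_cast; ring
        · rcases ha with h | h | h
          · rw [h]; apply neg2_pos; apply mul3_neg_nnn <;> linarith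
          · rw [h]; apply neg2_pos; apply mul3_neg_nnn <;> linarith
          · exfalso; omega
        · rcases ha with h | h | h
          · exfalso; omega
          · have cw2 : (w:ℝ) + 2 ≤ w' := by exact_mod_cast (show w + 2 ≤ w' by omega)
            rw [h]; apply neg2_neg; apply mul3_pos_ppp <;> linarith
          · rw [h]; push_cast; apply neg2_neg; apply mul3_pos_ppp <;> linarith
      · by_cases hD : u' < w
        · -- T2d : p = (M-2t)((t-u')²-1/4)
          have cu'w : (u':ℝ) < w := by exact_mod_cast hD
          refine sepPoly_of_cubic (-2) (((w:ℝ)+(w':ℝ)+1)/2) ((u':ℝ)+1/2) ((u':ℝ)-1/2) _ _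
            ?_ ?_ ?_ <;> intro a ha hb <;> unfold tmem at ha hb
          · rcases ha with h | h | h
            · exfalso; omega
            · exfalso; omega
            · have e : w' = w + 1 := by omega
              rw [h, e]; push_cast; ring
          · rcases ha with h | h | h
            · rcases Nat.lt_or_ge u u' with hx | hx
              · have cx : (u:ℝ) + 1 ≤ u' := by exact_mod_cast (show u + 1 ≤ u' by omega)
                rw [h]; apply neg2_pos; apply mul3_neg_nnn <;> linarith
              · have cx : (u':ℝ) + 1 ≤ u := by exact_mod_cast (show u' + 1 ≤ u by omega)
                rw [h]; apply neg2_pos; apply mul3_neg_npp <;> linarith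
            · have cx : (u':ℝ) + 1 ≤ w := by exact_mod_cast (show u' + 1 ≤ w by omega)
              rw [h]; apply neg2_pos; apply mul3_neg_npp <;> linarith
            · have cw1 : (w:ℝ) + 1 < w' := by exact_mod_cast (show w + 1 < w' by omega)
              have cx : (u':ℝ) + 1 ≤ w := by exact_mod_cast (show u' + 1 ≤ w by omega)
              rw [h]; push_cast; apply neg2_pos; apply mul3_neg_npp <;> linarith
          · rcases ha with h | h | h
            · rw [h]; apply neg2_neg; apply mul3_pos_nnp <;> linarith
            · have cw2 : (w:ℝ) + 2 ≤ w' := by exact_mod_cast (show w + 2 ≤ w' by omega)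
              have cx : (u':ℝ) + 1 ≤ w := by exact_mod_cast (show u' + 1 ≤ w by omega)
              rw [h]; apply neg2_neg; apply mul3_pos_ppp <;> linarith
            · have cx : (u':ℝ) + 1 ≤ w := by exact_mod_cast (show u' + 1 ≤ w by omega)
              rw [h]; push_cast; apply neg2_neg; apply mul3_pos_ppp <;> linarith
        · -- T2e : u' ≥ w+2 ; p = (w+3/2) - t
          have cE : (w:ℝ) + 2 ≤ u' := by exact_mod_cast (show w + 2 ≤ u' by omega)
          refine sepPoly_of_linear ((w:ℝ)+3/2) (-1) _ _ ?_ ?_ ?_ <;>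
            intro a ha hb <;> unfold tmem at ha hb
          · exfalso; omega
          · rcases ha with h | h | h
            · rw [h]; linarith
            · rw [h]; linarith
            · rw [h]; push_cast; linarith
          · rcases ha with h | h | h
            · rw [h]; linarith
            · rw [h]; linarith
            · rw [h]; push_cast; linarith

/-- Separating cubic for two distinct triangle edges. -/
lemma tri_sep (u w u' w' : ℕ) (h1 : u < w) (h2 : u' < w') (hne : ¬(u = u' ∧ w = w')) :
    ∃ A B C D : ℝ, SepPoly A B C D (tmem u w) (tmem u' w') := by
  rcases Nat.lt_trichotomy w w' with h3 | h3 | h3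
  · exact tri_sep_lt u w u' w' h1 h2 h3
  · -- w = w'
    have hu : u ≠ u' := fun h => hne ⟨h, h3⟩
    have cu : (u:ℝ) < w := by exact_mod_cast h1
    have cu' : (u':ℝ) < w := by exact_mod_cast (show u' < w by omega)
    rcases Nat.lt_or_ge u u' with h4 | h4
    · have c4 : (u:ℝ) < u' := by exact_mod_cast h4
      refine sepPoly_of_cubic (-1) w ((w:ℝ)+1) (((u:ℝ)+u')/2) _ _ ?_ ?_ ?_ <;>
        intro a ha hb <;> unfold tmem at ha hb
      · rcases ha with h | h | h
        · exfalso; omega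
        · rw [h]; push_cast; ring
        · rw [h]; push_cast; ring
      · rcases ha with h | h | h
        · rw [h]; apply neg1_pos; apply mul3_neg_nnn <;> linarith
        · exfalso; omega
        · exfalso; omega
      · rcases ha with h | h | h
        · rw [h]; apply neg1_neg; apply mul3_pos_nnp <;> linarith
        · exfalso; omega
        · exfalso; omega
    · have c4 : (u':ℝ) < u := by exact_mod_cast (show u' < u by omega)
      refine sepPoly_of_cubic 1 w ((w:ℝ)+1) (((u:ℝ)+u')/2) _ _ ?_ ?_ ?_ <;>
        intro a ha hb <;> unfold tmem at ha hb
      · rcases ha with h | h | h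
        · exfalso; omega
        · rw [h]; push_cast; ring
        · rw [h]; push_cast; ring
      · rcases ha with h | h | h
        · rw [h]; apply one1_pos; apply mul3_pos_nnp <;> linarith
        · exfalso; omega
        · exfalso; omega
      · rcases ha with h | h | h
        · rw [h]; apply one1_neg; apply mul3_neg_nnn <;> linarith
        · exfalso; omega
        · exfalso; omega
  · obtain ⟨A, B, C, D, h⟩ := tri_sep_lt u' w' u w h2 h1 h3
    exact ⟨-A, -B, -C, -D, sepPoly_neg h⟩

/-- Building a separating quadratic. -/
lemma sepPoly_of_quad (s α β : ℝ) (e₁ e₂ : ℕ → Prop)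
    (h0 : ∀ a : ℕ, e₁ a → e₂ a → s * (((a:ℝ) - α) * ((a:ℝ) - β)) = 0)
    (hp : ∀ a : ℕ, e₁ a → ¬ e₂ a → 0 < s * (((a:ℝ) - α) * ((a:ℝ) - β)))
    (hn : ∀ a : ℕ, e₂ a → ¬ e₁ a → s * (((a:ℝ) - α) * ((a:ℝ) - β)) < 0) :
    ∃ A B C D : ℝ, SepPoly A B C D e₁ e₂ := by
  refine ⟨s*(α*β), -(s*(α+β)), s, 0, fun a => ?_⟩
  have key : pv (s*(α*β)) (-(s*(α+β))) s 0 a = s * (((a:ℝ) - α) * ((a:ℝ) - β)) := by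
    simp [pv]; ring
  exact ⟨fun x y => by rw [key]; exact h0 a x y, fun x y => by rw [key]; exact hp a x y,
    fun x y => by rw [key]; exact hn a x y⟩

lemma mul2_pos_pp {X Y : ℝ} (hx : 0 < X) (hy : 0 < Y) : 0 < X * Y := mul_pos hx hy
lemma mul2_pos_nn {X Y : ℝ} (hx : X < 0) (hy : Y < 0) : 0 < X * Y := mul_pos_of_neg_of_neg hx hy
lemma mul2_neg_pn {X Y : ℝ} (hx : 0 < X) (hy : Y < 0) : X * Y < 0 := mul_neg_of_pos_of_neg hx hy
lemma mul2_neg_np {X Y : ℝ} (hx : X < 0) (hy : 0 < Y) : X * Y < 0 := mul_neg_of_neg_of_pos hx hy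

/-- Separating cubic for two distinct segment edges `{u,v}`, `{u',v'}`. -/
lemma pair_sep (u v u' v' : ℕ) (h1 : u < v) (h2 : u' < v') (hne : ¬(u = u' ∧ v = v')) :
    ∃ A B C D : ℝ, SepPoly A B C D (pmem u v) (pmem u' v') := by
  have c1 : (u:ℝ) < v := by exact_mod_cast h1
  have c2 : (u':ℝ) < v' := by exact_mod_cast h2
  by_cases hA : u = u'
  · -- shared bottom vertex
    have hvv : v ≠ v' := fun h => hne ⟨hA, h⟩
    rcases Nat.lt_or_ge v v' with h4 | h4
    · have c4 : (v:ℝ) < v' := by exact_mod_cast h4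
      have c7 : (u:ℝ) < v' := by exact_mod_cast (show u < v' by omega)
      refine sepPoly_of_cubic (-1) u u (((v:ℝ)+v')/2) _ _ ?_ ?_ ?_ <;>
        intro a ha hb <;> unfold pmem at ha hb
      · rcases ha with h | h
        · rw [h]; push_cast; ring
        · exfalso; omega
      · rcases ha with h | h
        · exfalso; omega
        · rw [h]; apply neg1_pos; apply mul3_neg_ppn <;> linarith
      · rcases ha with h | h
        · exfalso; omega
        · rw [h]; apply neg1_neg; apply mul3_pos_ppp <;> linarith
    · have c4 : (v':ℝ) < v := by exact_mod_cast (show v' < v by omega)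
      have c7 : (u:ℝ) < v' := by exact_mod_cast (show u < v' by omega)
      refine sepPoly_of_cubic 1 u u (((v:ℝ)+v')/2) _ _ ?_ ?_ ?_ <;>
        intro a ha hb <;> unfold pmem at ha hb
      · rcases ha with h | h
        · rw [h]; push_cast; ring
        · exfalso; omega
      · rcases ha with h | h
        · exfalso; omega
        · rw [h]; apply one1_pos; apply mul3_pos_ppp <;> linarith
      · rcases ha with h | h
        · exfalso; omega
        · rw [h]; apply one1_neg; apply mul3_neg_ppn <;> linarith
  · by_cases hB : v = v'
    · -- shared top vertex
      rcases Nat.lt_or_ge u u' with h4 | h4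
      · have c4 : (u:ℝ) < u' := by exact_mod_cast h4
        have c2' : (u':ℝ) < v := by exact_mod_cast (show u' < v by omega)
        refine sepPoly_of_cubic (-1) v v (((u:ℝ)+u')/2) _ _ ?_ ?_ ?_ <;>
          intro a ha hb <;> unfold pmem at ha hb
        · rcases ha with h | h
          · exfalso; omega
          · rw [h]; push_cast; ring
        · rcases ha with h | h
          · rw [h]; apply neg1_pos; apply mul3_neg_nnn <;> linarith
          · exfalso; omega
        · rcases ha with h | h
          · rw [h]; apply neg1_neg; apply mul3_pos_nnp <;> linarith
          · exfalso; omega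
      · have c4 : (u':ℝ) < u := by exact_mod_cast (show u' < u by omega)
        refine sepPoly_of_cubic 1 v v (((u:ℝ)+u')/2) _ _ ?_ ?_ ?_ <;>
          intro a ha hb <;> unfold pmem at ha hb
        · rcases ha with h | h
          · exfalso; omega
          · rw [h]; push_cast; ring
        · rcases ha with h | h
          · rw [h]; apply one1_pos; apply mul3_pos_nnp <;> linarith
          · exfalso; omega
        · rcases ha with h | h
          · rw [h]; apply one1_neg; apply mul3_neg_nnn <;> linarith
          · exfalso; omega
    · by_cases hC : u = v'
      · -- u'< v' = u < v
        have c4 : (u':ℝ) < u := by exact_mod_cast (show u' < u by omega)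
        refine sepPoly_of_cubic 1 u u (((u':ℝ)+u)/2) _ _ ?_ ?_ ?_ <;>
          intro a ha hb <;> unfold pmem at ha hb
        · rcases ha with h | h
          · rw [h]; push_cast; ring
          · exfalso; omega
        · rcases ha with h | h
          · exfalso; omega
          · rw [h]; apply one1_pos; apply mul3_pos_ppp <;> linarith
        · rcases ha with h | h
          · rw [h]; apply one1_neg; apply mul3_neg_nnn <;> linarith
          · exfalso; omega
      · by_cases hD : v = u'
        · -- u < v = u' < v'
          have c4 : (v:ℝ) < v' := by exact_mod_cast (show v < v' by omega)
          refine sepPoly_of_cubic (-1) v v v _ _ ?_ ?_ ?_ <;>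
            intro a ha hb <;> unfold pmem at ha hb
          · rcases ha with h | h
            · exfalso; omega
            · rw [h]; push_cast; ring
          · rcases ha with h | h
            · rw [h]; apply neg1_pos; apply mul3_neg_nnn <;> linarith
            · exfalso; omega
          · rcases ha with h | h
            · exfalso; omega
            · rw [h]; apply neg1_neg; apply mul3_pos_ppp <;> linarith
        · -- all four vertices distinct
          by_cases hE : v < u'
          · have c5 : (v:ℝ) < u' := by exact_mod_cast hE
            refine sepPoly_of_linear (((v:ℝ)+u')/2) (-1) _ _ ?_ ?_ ?_ <;>
              intro a ha hb <;> unfold pmem at ha hb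
            · exfalso; omega
            · rcases ha with h | h <;> rw [h] <;> linarith
            · rcases ha with h | h <;> rw [h] <;> linarith
          · by_cases hF : v' < u
            · have c5 : (v':ℝ) < u := by exact_mod_cast hF
              refine sepPoly_of_linear (-(((v':ℝ)+u)/2)) 1 _ _ ?_ ?_ ?_ <;>
                intro a ha hb <;> unfold pmem at ha hb
              · exfalso; omega
              · rcases ha with h | h <;> rw [h] <;> linarith
              · rcases ha with h | h <;> rw [h] <;> linarith
            · rcases Nat.lt_or_ge u u' with h4 | h4
              · -- u < u' < v
                have c4 : (u:ℝ) < u' := by exact_mod_cast h4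
                have c5 : (u':ℝ) < v := by exact_mod_cast (show u' < v by omega)
                rcases Nat.lt_or_ge v v' with h6 | h6
                · -- u < u' < v < v' : interleaved
                  have c6 : (v:ℝ) < v' := by exact_mod_cast h6
                  refine sepPoly_of_cubic (-1) (((u:ℝ)+u')/2) (((u':ℝ)+v)/2)
                    (((v:ℝ)+v')/2) _ _ ?_ ?_ ?_ <;> intro a ha hb <;> unfold pmem at ha hb
                  · exfalso; omega
                  · rcases ha with h | h
                    · rw [h]; apply neg1_pos; apply mul3_neg_nnn <;> linarith
                    · rw [h]; apply neg1_pos; apply mul3_neg_ppn <;> linarith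
                  · rcases ha with h | h
                    · rw [h]; apply neg1_neg; apply mul3_pos_pnn <;> linarith
                    · rw [h]; apply neg1_neg; apply mul3_pos_ppp <;> linarith
                · -- u < u' < v' < v : nested
                  have c6 : (v':ℝ) < v := by exact_mod_cast (show v' < v by omega)
                  refine sepPoly_of_quad 1 (((u:ℝ)+u')/2) (((v':ℝ)+v)/2) _ _ ?_ ?_ ?_ <;>
                    intro a ha hb <;> unfold pmem at ha hb
                  · exfalso; omega
                  · rcases ha with h | h
                    · rw [h]; apply one1_pos; apply mul2_pos_nn <;> linarith
                    · rw [h]; apply one1_pos; apply mul2_pos_pp <;> linarith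
                  · rcases ha with h | h
                    · rw [h]; apply one1_neg; apply mul2_neg_pn <;> linarith
                    · rw [h]; apply one1_neg; apply mul2_neg_pn <;> linarith
              · -- u' < u
                have c4 : (u':ℝ) < u := by exact_mod_cast (show u' < u by omega)
                have c5 : (u:ℝ) < v' := by exact_mod_cast (show u < v' by omega)
                rcases Nat.lt_or_ge v v' with h6 | h6
                · -- u' < u < v < v' : nested
                  have c6 : (v:ℝ) < v' := by exact_mod_cast h6
                  refine sepPoly_of_quad (-1) (((u':ℝ)+u)/2) (((v:ℝ)+v')/2) _ _ ?_ ?_ ?_ <;>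
                    intro a ha hb <;> unfold pmem at ha hb
                  · exfalso; omega
                  · rcases ha with h | h
                    · rw [h]; apply neg1_pos; apply mul2_neg_pn <;> linarith
                    · rw [h]; apply neg1_pos; apply mul2_neg_pn <;> linarith
                  · rcases ha with h | h
                    · rw [h]; apply neg1_neg; apply mul2_pos_nn <;> linarith
                    · rw [h]; apply neg1_neg; apply mul2_pos_pp <;> linarith
                · -- u' < u < v' < v : interleaved
                  have c6 : (v':ℝ) < v := by exact_mod_cast (show v' < v by omega)
                  refine sepPoly_of_cubic 1 (((u':ℝ)+u)/2) (((u:ℝ)+v')/2)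
                    (((v':ℝ)+v)/2) _ _ ?_ ?_ ?_ <;> intro a ha hb <;> unfold pmem at ha hb
                  · exfalso; omega
                  · rcases ha with h | h
                    · rw [h]; apply one1_pos; apply mul3_pos_pnn <;> linarith
                    · rw [h]; apply one1_pos; apply mul3_pos_ppp <;> linarith
                  · rcases ha with h | h
                    · rw [h]; apply one1_neg; apply mul3_neg_nnn <;> linarith
                    · rw [h]; apply one1_neg; apply mul3_neg_ppn <;> linarith



section Family

variable {d c n : ℕ}

def apexSet (n c : ℕ) : Finset (Fin n) := univ.filter fun v => (v : ℕ) < c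

def tEdgeN (n c u w : ℕ) : Finset (Fin n) :=
  univ.filter fun v => (v : ℕ) < c ∨ (v : ℕ) = u ∨ (v : ℕ) = w ∨ (v : ℕ) = w + 1

def tEdges (n c : ℕ) : Finset (Finset (Fin n)) :=
  ((Finset.range n ×ˢ Finset.range n).filter fun p =>
    c ≤ p.1 ∧ p.1 < p.2 ∧ p.2 + 1 < n).image fun p => tEdgeN n c p.1 p.2

def pEdgeN (n u w : ℕ) : Finset (Fin n) := univ.filter fun v => (v : ℕ) = u ∨ (v : ℕ) = w

def pEdges (n : ℕ) : Finset (Finset (Fin n)) :=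
  ((Finset.range n ×ˢ Finset.range n).filter fun p => p.1 < p.2).image fun p =>
    pEdgeN n p.1 p.2

lemma mem_tEdges {e : Finset (Fin n)} :
    e ∈ tEdges n c ↔ ∃ u w : ℕ, c ≤ u ∧ u < w ∧ w + 1 < n ∧ e = tEdgeN n c u w := by
  unfold tEdges
  simp only [Finset.mem_image, Finset.mem_filter, Finset.mem_product, Finset.mem_range]
  constructor
  · rintro ⟨⟨u, w⟩, ⟨⟨hu, hw⟩, h1, h2, h3⟩, rfl⟩
    exact ⟨u, w, h1, h2, h3, rfl⟩
  · rintro ⟨u, w, h1, h2, h3, rfl⟩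
    exact ⟨(u, w), ⟨⟨by omega, by omega⟩, h1, h2, h3⟩, rfl⟩

lemma mem_pEdges {e : Finset (Fin n)} :
    e ∈ pEdges n ↔ ∃ u w : ℕ, u < w ∧ w < n ∧ e = pEdgeN n u w := by
  unfold pEdges
  simp only [Finset.mem_image, Finset.mem_filter, Finset.mem_product, Finset.mem_range]
  constructor
  · rintro ⟨⟨u, w⟩, ⟨⟨hu, hw⟩, h1⟩, rfl⟩
    exact ⟨u, w, h1, hw, rfl⟩
  · rintro ⟨u, w, h1, h2, rfl⟩
    exact ⟨(u, w), ⟨⟨by omega, by omega⟩, h1⟩, rfl⟩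

lemma apexSet_card (hcn : c ≤ n) : (apexSet n c).card = c := by
  apply Finset.card_eq_of_bijective (fun i hi => (⟨i, by omega⟩ : Fin n))
  · intro a ha
    simp only [apexSet, Finset.mem_filter, Finset.mem_univ, true_and] at ha
    exact ⟨(a : ℕ), ha, by simp⟩
  · intro i hi
    simp only [apexSet, Finset.mem_filter, Finset.mem_univ, true_and]
    exact hi
  · intro i j hi hj hij
    simpa [Fin.ext_iff] using hij

lemma tEdgeN_split (hcu : c ≤ u) (huw : u < w) (hw1 : w + 1 < n) :
    tEdgeN n c u w = insert (⟨u, by omega⟩ : Fin n) (insert (⟨w, by omega⟩ : Fin n)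
      (insert (⟨w + 1, by omega⟩ : Fin n) (apexSet n c))) := by
  ext v
  simp only [tEdgeN, apexSet, Finset.mem_filter, Finset.mem_univ, true_and, Finset.mem_insert,
    Fin.ext_iff]
  omega

lemma pEdgeN_split (huw : u < w) (hw : w < n) :
    pEdgeN n u w = insert (⟨u, by omega⟩ : Fin n) ({(⟨w, by omega⟩ : Fin n)} : Finset (Fin n)) := by
  ext v
  simp only [pEdgeN, Finset.mem_filter, Finset.mem_univ, true_and, Finset.mem_insert,
    Finset.mem_singleton, Fin.ext_iff]

lemma tEdgeN_card (hcu : c ≤ u) (huw : u < w) (hw1 : w + 1 < n) :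
    (tEdgeN n c u w).card = c + 3 := by
  rw [tEdgeN_split hcu huw hw1]
  have h1 : (⟨w + 1, by omega⟩ : Fin n) ∉ apexSet n c := by
    simp only [apexSet, Finset.mem_filter, Finset.mem_univ, true_and]; omega
  have h2 : (⟨w, by omega⟩ : Fin n) ∉
      insert (⟨w + 1, by omega⟩ : Fin n) (apexSet n c) := by
    simp only [Finset.mem_insert, Fin.ext_iff, apexSet, Finset.mem_filter, Finset.mem_univ,
      true_and]
    omega
  have h3 : (⟨u, by omega⟩ : Fin n) ∉ insert (⟨w, by omega⟩ : Fin n)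
      (insert (⟨w + 1, by omega⟩ : Fin n) (apexSet n c)) := by
    simp only [Finset.mem_insert, Fin.ext_iff, apexSet, Finset.mem_filter, Finset.mem_univ,
      true_and]
    omega
  rw [Finset.card_insert_of_notMem h3, Finset.card_insert_of_notMem h2,
    Finset.card_insert_of_notMem h1, apexSet_card (by omega)]

lemma pEdgeN_card (huw : u < w) (hw : w < n) : (pEdgeN n u w).card = 2 := by
  rw [pEdgeN_split huw hw, Finset.card_insert_of_notMem, Finset.card_singleton]
  simp only [Finset.mem_singleton, Fin.ext_iff]
  omega

end Family
section AffInd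

variable {d c n : ℕ}

/-- Coordinate projection functional. -/
noncomputable def dlin (d m : ℕ) : EuclideanSpace ℝ (Fin d) →ₗ[ℝ] ℝ :=
  lin d (fun i => if (i : ℕ) = m then 1 else 0)

lemma dlin_phi_apex (h : c + 3 ≤ d) (m : ℕ) (v : Fin n) (hv : (v : ℕ) < c) :
    dlin d m (phi d c n h v) = if (v : ℕ) = m then 1 else 0 := by
  rw [phi, dif_pos hv, dlin, lin_single, mul_one]

lemma dlin_phi_base_lt (h : c + 3 ≤ d) (m : ℕ) (v : Fin n) (hv : ¬ (v : ℕ) < c) (hm : m < c) :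
    dlin d m (phi d c n h v) = 0 := by
  rw [phi, dif_neg hv]
  simp only [map_add, map_smul, dlin, lin_single, smul_eq_mul]
  rw [if_neg (show ¬ (c = m) by omega),
    if_neg (show ¬ (c + 1 = m) by omega),
    if_neg (show ¬ (c + 2 = m) by omega)]
  ring

lemma dlin_phi_base_c (h : c + 3 ≤ d) (v : Fin n) (hv : ¬ (v : ℕ) < c) :
    dlin d c (phi d c n h v) = ((v : ℕ) : ℝ) := by
  rw [phi, dif_neg hv]
  simp only [map_add, map_smul, dlin, lin_single, smul_eq_mul]
  rw [if_neg (show ¬ (c + 1 = c) by omega), if_neg (show ¬ (c + 2 = c) by omega)]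
  norm_num

lemma dlin_phi_base_c1 (h : c + 3 ≤ d) (v : Fin n) (hv : ¬ (v : ℕ) < c) :
    dlin d (c + 1) (phi d c n h v) = ((v : ℕ) : ℝ) ^ 2 := by
  rw [phi, dif_neg hv]
  simp only [map_add, map_smul, dlin, lin_single, smul_eq_mul]
  rw [if_neg (show ¬ (c = c + 1) by omega), if_neg (show ¬ (c + 2 = c + 1) by omega)]
  norm_num

end AffInd
section EdgeInd

variable {d c n u w : ℕ}

lemma tri_affInd (h : c + 3 ≤ d) (hcu : c ≤ u) (huw : u < w) (hw1 : w + 1 < n) :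
    AffineIndependent ℝ
      ((↑) : ↑((tEdgeN n c u w).image (phi d c n h)) → EuclideanSpace ℝ (Fin d)) := by
  classical
  by_contra hna
  obtain ⟨f, hrel, hsum, x, hxt, hfx⟩ :=
    exists_nontrivial_relation_sum_zero_of_not_affine_ind hna
  have hinj : ∀ a ∈ tEdgeN n c u w, ∀ b ∈ tEdgeN n c u w, (phi d c n h) a = (phi d c n h) b → a = b :=
    fun a _ b _ hab => phi_injective h hab
  rw [Finset.sum_image hinj] at hrel hsum
  have h1' : (⟨w + 1, by omega⟩ : Fin n) ∉ apexSet n c := by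
    simp only [apexSet, Finset.mem_filter, Finset.mem_univ, true_and]; omega
  have h2' : (⟨w, by omega⟩ : Fin n) ∉
      insert (⟨w + 1, by omega⟩ : Fin n) (apexSet n c) := by
    simp only [Finset.mem_insert, Fin.ext_iff, apexSet, Finset.mem_filter, Finset.mem_univ,
      true_and]
    omega
  have h3' : (⟨u, by omega⟩ : Fin n) ∉ insert (⟨w, by omega⟩ : Fin n)
      (insert (⟨w + 1, by omega⟩ : Fin n) (apexSet n c)) := by
    simp only [Finset.mem_insert, Fin.ext_iff, apexSet, Finset.mem_filter, Finset.mem_univ,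
      true_and]
    omega
  rw [tEdgeN_split hcu huw hw1, Finset.sum_insert h3', Finset.sum_insert h2',
    Finset.sum_insert h1'] at hrel hsum
  set U : Fin n := ⟨u, by omega⟩
  set W : Fin n := ⟨w, by omega⟩
  set W1 : Fin n := ⟨w + 1, by omega⟩
  have hUc : ¬ ((U : ℕ) < c) := by simp only [U]; omega
  have hWc : ¬ ((W : ℕ) < c) := by simp only [W]; omega
  have hW1c : ¬ ((W1 : ℕ) < c) := by simp only [W1]; omega
  -- apex weights vanish
  have hapex : ∀ a ∈ apexSet n c, f ((phi d c n h) a) = 0 := by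
    intro a ha
    have hav : (a : ℕ) < c := by
      simpa only [apexSet, Finset.mem_filter, Finset.mem_univ, true_and] using ha
    have h0 := congrArg (dlin d (a : ℕ)) hrel
    simp only [map_add, map_smul, map_sum, map_zero, smul_eq_mul] at h0
    rw [dlin_phi_base_lt h (a : ℕ) U hUc hav, dlin_phi_base_lt h (a : ℕ) W hWc hav,
      dlin_phi_base_lt h (a : ℕ) W1 hW1c hav] at h0
    rw [Finset.sum_congr rfl (fun v hv => by
      rw [dlin_phi_apex h (a : ℕ) v (by
        simpa only [apexSet, Finset.mem_filter, Finset.mem_univ, true_and] using hv)])] at h0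
    rw [Finset.sum_eq_single a (fun b _ hb => by
        rw [if_neg (fun hh => hb (Fin.ext hh)), mul_zero])
      (fun hna => absurd ha hna), if_pos rfl, mul_one] at h0
    linarith
  -- the three moment equations
  have hA0 : ∑ v ∈ apexSet n c, f ((phi d c n h) v) = 0 := Finset.sum_eq_zero hapex
  have hE0 : f ((phi d c n h) U) + f ((phi d c n h) W) + f ((phi d c n h) W1) = 0 := by
    rw [hA0] at hsum; linarith
  have hE1 : f ((phi d c n h) U) * (u : ℝ) + f ((phi d c n h) W) * (w : ℝ) + f ((phi d c n h) W1) * ((w : ℝ) + 1) = 0 := by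
    have h0 := congrArg (dlin d c) hrel
    simp only [map_add, map_smul, map_sum, map_zero, smul_eq_mul] at h0
    rw [dlin_phi_base_c h U hUc, dlin_phi_base_c h W hWc, dlin_phi_base_c h W1 hW1c,
      Finset.sum_eq_zero (fun v hv => by
        rw [dlin_phi_apex h c v (by
            simpa only [apexSet, Finset.mem_filter, Finset.mem_univ, true_and] using hv),
          if_neg (by
            have : (v : ℕ) < c := by
              simpa only [apexSet, Finset.mem_filter, Finset.mem_univ, true_and] using hv
            omega), mul_zero])] at h0
    simp only [U, W, W1] at h0
    push_cast at h0 ⊢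
    linarith
  have hE2 : f ((phi d c n h) U) * (u : ℝ) ^ 2 + f ((phi d c n h) W) * (w : ℝ) ^ 2
      + f ((phi d c n h) W1) * ((w : ℝ) + 1) ^ 2 = 0 := by
    have h0 := congrArg (dlin d (c + 1)) hrel
    simp only [map_add, map_smul, map_sum, map_zero, smul_eq_mul] at h0
    rw [dlin_phi_base_c1 h U hUc, dlin_phi_base_c1 h W hWc, dlin_phi_base_c1 h W1 hW1c,
      Finset.sum_eq_zero (fun v hv => by
        rw [dlin_phi_apex h (c + 1) v (by
            simpa only [apexSet, Finset.mem_filter, Finset.mem_univ, true_and] using hv),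
          if_neg (by
            have : (v : ℕ) < c := by
              simpa only [apexSet, Finset.mem_filter, Finset.mem_univ, true_and] using hv
            omega), mul_zero])] at h0
    simp only [U, W, W1] at h0
    push_cast at h0 ⊢
    linarith
  -- solve the Vandermonde system
  have cuw : (u : ℝ) < w := by exact_mod_cast huw
  have hU0 : f ((phi d c n h) U) = 0 := by
    have key : f ((phi d c n h) U) * (((u : ℝ) - w) * ((u : ℝ) - ((w : ℝ) + 1))) = 0 := by
      linear_combination hE2 - ((w : ℝ) + ((w : ℝ) + 1)) * hE1
        + ((w : ℝ) * ((w : ℝ) + 1)) * hE0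
    rcases mul_eq_zero.1 key with hk | hk
    · exact hk
    · exfalso; rcases mul_eq_zero.1 hk with hk' | hk' <;> nlinarith
  have hW0 : f ((phi d c n h) W) = 0 := by
    have key : f ((phi d c n h) W) * (((w : ℝ) - u) * ((w : ℝ) - ((w : ℝ) + 1))) = 0 := by
      linear_combination hE2 - ((u : ℝ) + ((w : ℝ) + 1)) * hE1
        + ((u : ℝ) * ((w : ℝ) + 1)) * hE0
    rcases mul_eq_zero.1 key with hk | hk
    · exact hk
    · exfalso; rcases mul_eq_zero.1 hk with hk' | hk' <;> nlinarith
  have hW10 : f ((phi d c n h) W1) = 0 := by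
    have := hE0; rw [hU0, hW0] at this; linarith
  -- contradiction
  obtain ⟨v, hv, rfl⟩ := Finset.mem_image.1 hxt
  apply hfx
  rw [tEdgeN_split hcu huw hw1] at hv
  rcases Finset.mem_insert.1 hv with rfl | hv
  · exact hU0
  rcases Finset.mem_insert.1 hv with rfl | hv
  · exact hW0
  rcases Finset.mem_insert.1 hv with rfl | hv
  · exact hW10
  · exact hapex v hv

lemma pair_affInd (h : 0 + 3 ≤ d) (huw : u < w) (hw : w < n) :
    AffineIndependent ℝ
      ((↑) : ↑((pEdgeN n u w).image (phi d 0 n h)) → EuclideanSpace ℝ (Fin d)) := by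
  classical
  by_contra hna
  obtain ⟨f, hrel, hsum, x, hxt, hfx⟩ :=
    exists_nontrivial_relation_sum_zero_of_not_affine_ind hna
  have hinj : ∀ a ∈ pEdgeN n u w, ∀ b ∈ pEdgeN n u w, (phi d 0 n h) a = (phi d 0 n h) b → a = b :=
    fun a _ b _ hab => phi_injective h hab
  rw [Finset.sum_image hinj] at hrel hsum
  have h1' : (⟨u, by omega⟩ : Fin n) ∉ ({(⟨w, by omega⟩ : Fin n)} : Finset (Fin n)) := by
    simp only [Finset.mem_singleton, Fin.ext_iff]; omega
  rw [pEdgeN_split huw hw, Finset.sum_insert h1', Finset.sum_singleton] at hrel hsum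
  set U : Fin n := ⟨u, by omega⟩
  set W : Fin n := ⟨w, by omega⟩
  have hUc : ¬ ((U : ℕ) < 0) := by omega
  have hWc : ¬ ((W : ℕ) < 0) := by omega
  have hE1 : f ((phi d 0 n h) U) * (u : ℝ) + f ((phi d 0 n h) W) * (w : ℝ) = 0 := by
    have h0 := congrArg (dlin d 0) hrel
    simp only [map_add, map_smul, map_zero, smul_eq_mul] at h0
    rw [dlin_phi_base_c h U hUc, dlin_phi_base_c h W hWc] at h0
    exact h0
  have cuw : (u : ℝ) < w := by exact_mod_cast huw
  have hU0 : f ((phi d 0 n h) U) = 0 := by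
    have key : f ((phi d 0 n h) U) * ((u : ℝ) - w) = 0 := by linear_combination hE1 - (w : ℝ) * hsum
    rcases mul_eq_zero.1 key with hk | hk
    · exact hk
    · exfalso; nlinarith
  have hW0 : f ((phi d 0 n h) W) = 0 := by
    rw [hU0] at hsum; linarith
  obtain ⟨v, hv, rfl⟩ := Finset.mem_image.1 hxt
  apply hfx
  rw [pEdgeN_split huw hw] at hv
  rcases Finset.mem_insert.1 hv with rfl | hv
  · exact hU0
  · rw [Finset.mem_singleton.1 hv]; exact hW0

end EdgeInd




section Cover

variable {n c : ℕ}

lemma tEdges_cover (hc3 : c + 3 ≤ n) (x y : Fin n) (hxy : x ≠ y) :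
    ∃ e ∈ tEdges n c, x ∈ e ∧ y ∈ e := by
  -- reduce to ordered case
  wlog hlt : (x : ℕ) < (y : ℕ) generalizing x y
  · have hyx : (y : ℕ) < (x : ℕ) := by
      rcases Nat.lt_trichotomy (x : ℕ) (y : ℕ) with h | h | h
      · exact absurd h hlt
      · exact absurd (Fin.ext h) hxy
      · exact h
    obtain ⟨e, he, h1, h2⟩ := this y x (Ne.symm hxy) hyx
    exact ⟨e, he, h2, h1⟩
  set a := (x : ℕ)
  set b := (y : ℕ)
  have hbn : b < n := y.isLt
  have hmem : ∀ u w : ℕ, c ≤ u → u < w → w + 1 < n →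
      (a < c ∨ a = u ∨ a = w ∨ a = w + 1) → (b < c ∨ b = u ∨ b = w ∨ b = w + 1) →
      ∃ e ∈ tEdges n c, x ∈ e ∧ y ∈ e := by
    intro u w h1 h2 h3 h4 h5
    refine ⟨tEdgeN n c u w, mem_tEdges.2 ⟨u, w, h1, h2, h3, rfl⟩, ?_, ?_⟩ <;>
      simp only [tEdgeN, Finset.mem_filter, Finset.mem_univ, true_and]
    · exact h4
    · exact h5
  by_cases h1 : b < c
  · exact hmem c (c + 1) (le_refl c) (by omega) (by omega) (by omega) (by omega)
  · by_cases h2 : a < c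
    · by_cases h3 : b + 1 < n
      · by_cases h4 : c < b
        · exact hmem c b (le_refl c) (by omega) (by omega) (by omega) (by omega)
        · exact hmem b (b + 1) (by omega) (by omega) (by omega) (by omega) (by omega)
      · exact hmem c (n - 2) (le_refl c) (by omega) (by omega) (by omega) (by omega)
    · by_cases h3 : b + 1 < n
      · exact hmem a b (by omega) (by omega) (by omega) (by omega) (by omega)
      · by_cases h4 : a + 1 < b
        · exact hmem a (n - 2) (by omega) (by omega) (by omega) (by omega) (by omega)
        · exact hmem c (n - 2) (by omega) (by omega) (by omega) (by omega) (by omega)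

lemma pEdges_cover (x y : Fin n) (hxy : x ≠ y) :
    ∃ e ∈ pEdges n, x ∈ e ∧ y ∈ e := by
  wlog hlt : (x : ℕ) < (y : ℕ) generalizing x y
  · have hyx : (y : ℕ) < (x : ℕ) := by
      rcases Nat.lt_trichotomy (x : ℕ) (y : ℕ) with h | h | h
      · exact absurd h hlt
      · exact absurd (Fin.ext h) hxy
      · exact h
    obtain ⟨e, he, h1, h2⟩ := this y x (Ne.symm hxy) hyx
    exact ⟨e, he, h2, h1⟩
  refine ⟨pEdgeN n (x : ℕ) (y : ℕ), mem_pEdges.2 ⟨(x : ℕ), (y : ℕ), hlt, y.isLt, rfl⟩, ?_, ?_⟩ <;>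
    simp only [pEdgeN, Finset.mem_filter, Finset.mem_univ, true_and]
  · exact Or.inl trivial
  · exact Or.inr trivial

end Cover

section Chrom

variable {n : ℕ}

lemma strongChrom_eq (H : FinHypergraph (Fin n))
    (hcov : ∀ x y : Fin n, x ≠ y → ∃ e ∈ H.edges, x ∈ e ∧ y ∈ e) :
    H.strongChromaticNumber = n := by
  have hmem : H.StrongColorable n := ⟨fun v => v, fun e _ => fun p _ q _ hpq => hpq⟩
  have hnot : ∀ m ∈ {c | H.StrongColorable c}, n ≤ m := by
    rintro m ⟨κ, hκ⟩
    by_contra hlt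
    push_neg at hlt
    have hcard : Fintype.card (Fin m) < Fintype.card (Fin n) := by simpa
    obtain ⟨p, q, hpq, hmap⟩ := Fintype.exists_ne_map_eq_of_card_lt κ hcard
    obtain ⟨e, he, hp, hq⟩ := hcov p q hpq
    exact hpq (hκ e he (Finset.mem_coe.2 hp) (Finset.mem_coe.2 hq) hmap)
  exact le_antisymm (Nat.sInf_le hmem) (le_csInf ⟨n, hmem⟩ hnot)

end Chrom
section Hull

variable {d c n : ℕ}

set_option maxHeartbeats 2000000 in
lemma tri_hull (h : c + 3 ≤ d) {e₁ e₂ : Finset (Fin n)} (he₁ : e₁ ∈ tEdges n c)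
    (he₂ : e₂ ∈ tEdges n c) :
    convexHull ℝ (phi d c n h '' ↑(e₁ ∩ e₂)) =
      convexHull ℝ (phi d c n h '' ↑e₁) ∩ convexHull ℝ (phi d c n h '' ↑e₂) := by
  apply Set.Subset.antisymm
  · apply Set.subset_inter
    · exact convexHull_mono (Set.image_mono fun z hz =>
        Finset.mem_coe.2 (Finset.mem_of_mem_inter_left (Finset.mem_coe.1 hz)))
    · exact convexHull_mono (Set.image_mono fun z hz =>
        Finset.mem_coe.2 (Finset.mem_of_mem_inter_right (Finset.mem_coe.1 hz)))
  · by_cases heq : e₁ = e₂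
    · subst heq
      rw [Finset.inter_self, Set.inter_self]
    · obtain ⟨u, w, hcu, huw, hw1, rfl⟩ := mem_tEdges.1 he₁
      obtain ⟨u', w', hcu', huw', hw1', rfl⟩ := mem_tEdges.1 he₂
      have hne : ¬(u = u' ∧ w = w') := by rintro ⟨rfl, rfl⟩; exact heq rfl
      obtain ⟨A, B, C, D, hsep⟩ := tri_sep u w u' w' huw huw' hne
      apply sep_lemma (phi d c n h) _ _ (lin d (coefFn d c A B C D)) A
      · intro v hv1 hv2
        by_cases hvc : (v : ℕ) < c
        · rw [lin_phi_apex h A B C D v hvc]; ring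
        · simp only [tEdgeN, Finset.mem_filter, Finset.mem_univ, true_and] at hv1 hv2
          have hm1 : tmem u w (v : ℕ) := by unfold tmem; tauto
          have hm2 : tmem u' w' (v : ℕ) := by unfold tmem; tauto
          have hz := (hsep (v : ℕ)).1 hm1 hm2
          rw [lin_phi_base h A B C D v hvc]
          unfold pv at hz; linarith
      · intro v hv1 hv2
        have hvc : ¬ (v : ℕ) < c := by
          intro hvc
          refine hv2 ?_
          simp only [tEdgeN, Finset.mem_filter, Finset.mem_univ, true_and]
          exact Or.inl hvc
        simp only [tEdgeN, Finset.mem_filter, Finset.mem_univ, true_and] at hv1 hv2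
        have hm1 : tmem u w (v : ℕ) := by unfold tmem; tauto
        have hm2 : ¬ tmem u' w' (v : ℕ) := by unfold tmem; tauto
        have hz := (hsep (v : ℕ)).2.1 hm1 hm2
        rw [lin_phi_base h A B C D v hvc]
        unfold pv at hz; linarith
      · intro v hv1 hv2
        have hvc : ¬ (v : ℕ) < c := by
          intro hvc
          refine hv2 ?_
          simp only [tEdgeN, Finset.mem_filter, Finset.mem_univ, true_and]
          exact Or.inl hvc
        simp only [tEdgeN, Finset.mem_filter, Finset.mem_univ, true_and] at hv1 hv2
        have hm1 : tmem u' w' (v : ℕ) := by unfold tmem; tauto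
        have hm2 : ¬ tmem u w (v : ℕ) := by unfold tmem; tauto
        have hz := (hsep (v : ℕ)).2.2 hm1 hm2
        rw [lin_phi_base h A B C D v hvc]
        unfold pv at hz; linarith

set_option maxHeartbeats 2000000 in
lemma pair_hull (h : 0 + 3 ≤ d) {e₁ e₂ : Finset (Fin n)} (he₁ : e₁ ∈ pEdges n)
    (he₂ : e₂ ∈ pEdges n) :
    convexHull ℝ (phi d 0 n h '' ↑(e₁ ∩ e₂)) =
      convexHull ℝ (phi d 0 n h '' ↑e₁) ∩ convexHull ℝ (phi d 0 n h '' ↑e₂) := by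
  apply Set.Subset.antisymm
  · apply Set.subset_inter
    · exact convexHull_mono (Set.image_mono fun z hz =>
        Finset.mem_coe.2 (Finset.mem_of_mem_inter_left (Finset.mem_coe.1 hz)))
    · exact convexHull_mono (Set.image_mono fun z hz =>
        Finset.mem_coe.2 (Finset.mem_of_mem_inter_right (Finset.mem_coe.1 hz)))
  · by_cases heq : e₁ = e₂
    · subst heq
      rw [Finset.inter_self, Set.inter_self]
    · obtain ⟨u, w, huw, hw, rfl⟩ := mem_pEdges.1 he₁
      obtain ⟨u', w', huw', hw', rfl⟩ := mem_pEdges.1 he₂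
      have hne : ¬(u = u' ∧ w = w') := by rintro ⟨rfl, rfl⟩; exact heq rfl
      obtain ⟨A, B, C, D, hsep⟩ := pair_sep u w u' w' huw huw' hne
      apply sep_lemma (phi d 0 n h) _ _ (lin d (coefFn d 0 A B C D)) A
      · intro v hv1 hv2
        simp only [pEdgeN, Finset.mem_filter, Finset.mem_univ, true_and] at hv1 hv2
        have hz := (hsep (v : ℕ)).1 hv1 hv2
        rw [lin_phi_base h A B C D v (by omega)]
        unfold pv at hz; linarith
      · intro v hv1 hv2
        simp only [pEdgeN, Finset.mem_filter, Finset.mem_univ, true_and] at hv1 hv2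
        have hz := (hsep (v : ℕ)).2.1 hv1 hv2
        rw [lin_phi_base h A B C D v (by omega)]
        unfold pv at hz; linarith
      · intro v hv1 hv2
        simp only [pEdgeN, Finset.mem_filter, Finset.mem_univ, true_and] at hv1 hv2
        have hz := (hsep (v : ℕ)).2.2 hv1 hv2
        rw [lin_phi_base h A B C D v (by omega)]
        unfold pv at hz; linarith

lemma tri_rank (h : c + 3 ≤ d) {e : Finset (Fin n)} (he : e ∈ tEdges n c) :
    Module.finrank ℝ (affineSpan ℝ (phi d c n h '' (e : Set (Fin n)))).direction = c + 2 := by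
  obtain ⟨u, w, hcu, huw, hw1, rfl⟩ := mem_tEdges.1 he
  have hAI := tri_affInd (n := n) h hcu huw hw1
  have hcard : Fintype.card ↑((tEdgeN n c u w).image (phi d c n h)) = (c + 2) + 1 := by
    rw [Fintype.card_coe, Finset.card_image_of_injective _ (phi_injective h),
      tEdgeN_card hcu huw hw1]
  have hfin := hAI.finrank_vectorSpan hcard
  have himg : Set.range ((↑) : ↑((tEdgeN n c u w).image (phi d c n h)) → EuclideanSpace ℝ (Fin d))
      = phi d c n h '' ↑(tEdgeN n c u w) := by
    rw [Subtype.range_coe]; exact Finset.coe_image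
  rw [himg] at hfin
  rw [direction_affineSpan]
  exact hfin

lemma pair_rank (h : 0 + 3 ≤ d) {e : Finset (Fin n)} (he : e ∈ pEdges n) :
    Module.finrank ℝ (affineSpan ℝ (phi d 0 n h '' (e : Set (Fin n)))).direction = 1 := by
  obtain ⟨u, w, huw, hw, rfl⟩ := mem_pEdges.1 he
  have hAI := pair_affInd (n := n) h huw hw
  have hcard : Fintype.card ↑((pEdgeN n u w).image (phi d 0 n h)) = 1 + 1 := by
    rw [Fintype.card_coe, Finset.card_image_of_injective _ (phi_injective h),
      pEdgeN_card huw hw]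
  have hfin := hAI.finrank_vectorSpan hcard
  have himg : Set.range ((↑) : ↑((pEdgeN n u w).image (phi d 0 n h)) → EuclideanSpace ℝ (Fin d))
      = phi d 0 n h '' ↑(pEdgeN n u w) := by
    rw [Subtype.range_coe]; exact Finset.coe_image
  rw [himg] at hfin
  rw [direction_affineSpan]
  exact hfin

end Hull

/-- Corollary 3.8: `χˢ_{d,k}(n) = n` for `d ≥ 3` and `2 ≤ k ≤ d`. -/
theorem strong_lower_bound_d_k (d k n : ℕ) (hd : 3 ≤ d) (hk2 : 2 ≤ k) (hkd : k ≤ d)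
    (hn : k ≤ n) :
    ∃ H : FinHypergraph (Fin n), H.IsUniform k ∧ H.HasLinearEmbedding k d ∧
      H.strongChromaticNumber = n := by
  by_cases hk3 : 3 ≤ k
  · set c := k - 3 with hc
    have h : c + 3 ≤ d := by omega
    refine ⟨⟨tEdges n c⟩, ?_, ?_, ?_⟩
    · intro e he
      obtain ⟨u, w, hcu, huw, hw1, rfl⟩ := mem_tEdges.1 he
      rw [tEdgeN_card hcu huw hw1]; omega
    · refine ⟨phi d c n h, ?_, ?_⟩
      · intro e he
        rw [tri_rank h he]; omega
      · intro e₁ he₁ e₂ he₂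
        exact tri_hull h he₁ he₂
    · apply strongChrom_eq
      intro x y hxy
      exact tEdges_cover (by omega) x y hxy
  · have hk2' : k = 2 := by omega
    subst hk2'
    have h : 0 + 3 ≤ d := by omega
    refine ⟨⟨pEdges n⟩, ?_, ?_, ?_⟩
    · intro e he
      obtain ⟨u, w, huw, hw, rfl⟩ := mem_pEdges.1 he
      exact pEdgeN_card huw hw
    · refine ⟨phi d 0 n h, ?_, ?_⟩
      · intro e he
        rw [pair_rank h he]
      · intro e₁ he₁ e₂ he₂
        exact pair_hull h he₁ he₂
    · exact strongChrom_eq _ (fun x y hxy => pEdges_cover x y hxy)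
end

section
/- Let ψ : ℝ → ℝ³ be the moment curve ψ(x) = (x, x², x³). For all real numbers a < b < c < d < e < f, the convex hull of {ψ(a), ψ(b), ψ(d)} and the convex hull of {ψ(c), ψ(e), ψ(f)} are disjoint. -/
/-- The moment curve in `ℝ³`. -/
noncomputable def momentCurve (x : ℝ) : ℝ × ℝ × ℝ := (x, x ^ 2, x ^ 3)

lemma mem_convexHull_triple {E : Type*} [AddCommGroup E] [Module ℝ E]
    {p q r x : E} (hx : x ∈ convexHull ℝ ({p, q, r} : Set E)) :
    ∃ α β γ : ℝ, 0 ≤ α ∧ 0 ≤ β ∧ 0 ≤ γ ∧ α + β + γ = 1 ∧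
      x = α • p + β • q + γ • r := by
  rw [convexHull_insert (by simp : ({q, r} : Set E).Nonempty), convexHull_pair,
    mem_convexJoin] at hx
  obtain ⟨p', hp', y, hy, hseg⟩ := hx
  rw [Set.mem_singleton_iff] at hp'
  subst hp'
  obtain ⟨s, t, hs, ht, hst, rfl⟩ := hy
  obtain ⟨u, v, hu, hv, huv, rfl⟩ := hseg
  refine ⟨u, v * s, v * t, hu, mul_nonneg hv hs, mul_nonneg hv ht, by nlinarith, ?_⟩
  simp [smul_add, smul_smul, add_assoc]

/-- Lemma 2.11 (key geometric claim): for `a < b < c < d < e < f` on the moment curve,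
the triangles `{ψ(a), ψ(b), ψ(d)}` and `{ψ(c), ψ(e), ψ(f)}` are disjoint. -/
theorem momentCurve_interleaved_triangles_disjoint
    (a b c d e f : ℝ) (hab : a < b) (hbc : b < c) (hcd : c < d) (hde : d < e)
    (hef : e < f) :
    convexHull ℝ ({momentCurve a, momentCurve b, momentCurve d} : Set (ℝ × ℝ × ℝ)) ∩
      convexHull ℝ ({momentCurve c, momentCurve e, momentCurve f} : Set (ℝ × ℝ × ℝ)) =
      ∅ := by
  rw [Set.eq_empty_iff_forall_notMem]
  rintro x ⟨hx1, hx2⟩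
  obtain ⟨α₁, α₂, α₃, hα₁, hα₂, hα₃, hαs, hxA⟩ := mem_convexHull_triple hx1
  obtain ⟨β₁, β₂, β₃, hβ₁, hβ₂, hβ₃, hβs, hxB⟩ := mem_convexHull_triple hx2
  have hx : α₁ • momentCurve a + α₂ • momentCurve b + α₃ • momentCurve d =
      β₁ • momentCurve c + β₂ • momentCurve e + β₃ • momentCurve f := by
    rw [← hxA, ← hxB]
  simp only [momentCurve, Prod.smul_mk, Prod.mk_add_mk, smul_eq_mul, Prod.mk.injEq] at hx
  obtain ⟨h1, h2, h3⟩ := hx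
  -- Apply the cubic  p(t) = -(t-c)(t-d)(t-e)  to the equality of moments.
  have hkey : α₁ * ((c - a) * (d - a) * (e - a)) + α₂ * ((c - b) * (d - b) * (e - b))
      + β₃ * ((f - c) * (f - d) * (f - e)) = 0 := by
    linear_combination (-(1:ℝ)) * h3 + (c + d + e) * h2 - (c*d + c*e + d*e) * h1
      + (c*d*e) * hαs - (c*d*e) * hβs
  have hpa : 0 < (c - a) * (d - a) * (e - a) := by
    apply mul_pos (mul_pos (by linarith) (by linarith)) (by linarith)
  have hpb : 0 < (c - b) * (d - b) * (e - b) := by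
    apply mul_pos (mul_pos (by linarith) (by linarith)) (by linarith)
  have hpf : 0 < (f - c) * (f - d) * (f - e) := by
    apply mul_pos (mul_pos (by linarith) (by linarith)) (by linarith)
  have t1 : 0 ≤ α₁ * ((c - a) * (d - a) * (e - a)) := mul_nonneg hα₁ hpa.le
  have t2 : 0 ≤ α₂ * ((c - b) * (d - b) * (e - b)) := mul_nonneg hα₂ hpb.le
  have t3 : 0 ≤ β₃ * ((f - c) * (f - d) * (f - e)) := mul_nonneg hβ₃ hpf.le
  have hα₁0 : α₁ = 0 := by
    have : α₁ * ((c - a) * (d - a) * (e - a)) = 0 := by linarith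
    rcases mul_eq_zero.1 this with h | h
    · exact h
    · exact absurd h hpa.ne'
  have hα₂0 : α₂ = 0 := by
    have : α₂ * ((c - b) * (d - b) * (e - b)) = 0 := by linarith
    rcases mul_eq_zero.1 this with h | h
    · exact h
    · exact absurd h hpb.ne'
  have hβ₃0 : β₃ = 0 := by
    have : β₃ * ((f - c) * (f - d) * (f - e)) = 0 := by linarith
    rcases mul_eq_zero.1 this with h | h
    · exact h
    · exact absurd h hpf.ne'
  subst hα₁0 hα₂0 hβ₃0
  have hα₃1 : α₃ = 1 := by linarith
  subst hα₃1
  -- Now d = β₁ c + β₂ e and d² = β₁ c² + β₂ e², β₁ + β₂ = 1: strict convexity contradiction.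
  have hβs' : β₁ + β₂ = 1 := by linarith
  have hββ : β₁ * β₂ * (c - e) ^ 2 = 0 := by
    linear_combination (d + β₁ * c + β₂ * e) * h1 - (β₁ + β₂) * h2 + d ^ 2 * hβs'
  have hce : (c - e) ^ 2 ≠ 0 := pow_ne_zero 2 (sub_ne_zero.mpr (by linarith))
  rcases mul_eq_zero.1 hββ with h | h
  · rcases mul_eq_zero.1 h with h' | h'
    · -- β₁ = 0, so β₂ = 1 and d = e
      have hβ2 : β₂ = 1 := by linarith
      have : d = e := by linear_combination h1 + c * h' + e * hβ2
      linarith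
    · -- β₂ = 0, so β₁ = 1 and d = c
      have hβ1 : β₁ = 1 := by linarith
      have : d = c := by linear_combination h1 + e * h' + c * hβ1
      linarith
  · exact hce h
end
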